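/- arXiv:math/9810109 — 8 statements merged into one kernel-verified Lean document; each statement's English description precedes it below -/
import Mathlib

section
/- Let 𝔤 = 𝔤₀ ⊕ 𝔤₁ be a Lie superalgebra over ℂ encoded in components, with 𝔤₀ solvable. Let 𝔨₁ ⊆ 𝔤₁ be a 𝔤₀-submodule with dim(𝔤₁/𝔨₁) = 1, and let μ : 𝔤₀ → ℂ be the weight of the one-dimensional 𝔤₀-module 𝔤₁/𝔨₁, i.e. x•ξ − μ(x)·ξ ∈ 𝔨₁ for all x ∈ 𝔤₀ and all ξ ∈ 𝔤₁. Then μ(⁅x,y⁆) = 0 for all x, y ∈ 𝔤₀ and μ(b(ξ,η)) = 0 for all ξ, η ∈ 𝔤₁; that is, the extension of μ by zero on 𝔤₁ is a character (one-dimensional representation) of 𝔤. -/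
/-- Let `𝔤 = 𝔤₀ ⊕ 𝔤₁` be a Lie superalgebra over `ℂ` encoded in
components (`L` is `𝔤₀`, `M` is `𝔤₁`, `b` is the bracket of two odd elements), with
`𝔤₀` solvable.  Let `k₁ ⊆ 𝔤₁` be a `𝔤₀`-submodule with `dim (𝔤₁/𝔨₁) = 1` and let
`μ : 𝔤₀ → ℂ` be the weight of the one-dimensional `𝔤₀`-module `𝔤₁/𝔨₁`.  Then
`μ(⁅x,y⁆) = 0` for all `x y ∈ 𝔤₀` and `μ(b(ξ,η)) = 0` for all `ξ η ∈ 𝔤₁`;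
that is, the extension of `μ` by zero on `𝔤₁` is a character of `𝔤`. -/
theorem zero_extension_of_weight_is_character
    (L : Type) [LieRing L] [LieAlgebra ℂ L] [FiniteDimensional ℂ L]
    [LieAlgebra.IsSolvable L]
    (M : Type) [AddCommGroup M] [Module ℂ M] [FiniteDimensional ℂ M]
    [LieRingModule L M] [LieModule ℂ L M]
    (b : M →ₗ[ℂ] M →ₗ[ℂ] L)
    (hb_symm : ∀ ξ η : M, b ξ η = b η ξ)
    (hb_equivariant : ∀ (x : L) (ξ η : M), ⁅x, b ξ η⁆ = b ⁅x, ξ⁆ η + b ξ ⁅x, η⁆)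
    (hb_jacobi : ∀ ξ η ζ : M, ⁅b ξ η, ζ⁆ + ⁅b η ζ, ξ⁆ + ⁅b ζ ξ, η⁆ = 0)
    (k₁ : Submodule ℂ M)
    (hk₁ : ∀ (x : L), ∀ ξ ∈ k₁, ⁅x, ξ⁆ ∈ k₁)
    (hdim : Module.finrank ℂ (M ⧸ k₁) = 1)
    (μ : L →ₗ[ℂ] ℂ)
    (hμ : ∀ (x : L) (ξ : M), ⁅x, ξ⁆ - μ x • ξ ∈ k₁) :
    (∀ x y : L, μ ⁅x, y⁆ = 0) ∧ (∀ ξ η : M, μ (b ξ η) = 0) := by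

  classical
  set π := k₁.mkQ with hπdef
  have hπ : ∀ (x : L) (ξ : M), π ⁅x, ξ⁆ = μ x • π ξ := by
    intro x ξ
    have h0 : π (⁅x, ξ⁆ - μ x • ξ) = 0 := (Submodule.Quotient.mk_eq_zero k₁).mpr (hμ x ξ)
    have := h0
    rw [map_sub, map_smul, sub_eq_zero] at this
    exact this
  -- a vector with nonzero image
  have hnt : ∃ ξ₀ : M, π ξ₀ ≠ 0 := by
    by_contra h
    push_neg at h
    have hsurj := Submodule.mkQ_surjective k₁
    have : ∀ v : M ⧸ k₁, v = 0 := by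
      intro v
      obtain ⟨ξ, rfl⟩ := hsurj v
      exact h ξ
    have : Module.finrank ℂ (M ⧸ k₁) = 0 := by
      have : Subsingleton (M ⧸ k₁) := ⟨fun a b => by rw [this a, this b]⟩
      exact Module.finrank_zero_of_subsingleton
    omega
  obtain ⟨ξ₀, hξ₀⟩ := hnt
  have cancel : ∀ c : ℂ, c • π ξ₀ = 0 → c = 0 := by
    intro c hc
    rcases smul_eq_zero.mp hc with h | h
    · exact h
    · exact absurd h hξ₀
  constructor
  · intro x y
    have h1 : π ⁅⁅x, y⁆, ξ₀⁆ = μ ⁅x, y⁆ • π ξ₀ := hπ _ _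
    have h2 : ⁅⁅x, y⁆, ξ₀⁆ = ⁅x, ⁅y, ξ₀⁆⁆ - ⁅y, ⁅x, ξ₀⁆⁆ := by
      rw [lie_lie]
    have h3 : π ⁅⁅x, y⁆, ξ₀⁆ = 0 := by
      rw [h2, map_sub, hπ, hπ, hπ, hπ, smul_smul, smul_smul, mul_comm, sub_self]
    apply cancel
    rw [← h1, h3]
  · intro ξ η
    have key : ∀ ξ η ζ : M,
        μ (b ξ η) • π ζ + μ (b η ζ) • π ξ + μ (b ζ ξ) • π η = 0 := by
      intro ξ η ζ
      have := hb_jacobi ξ η ζ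
      have h := congrArg π (hb_jacobi ξ η ζ)
      rw [map_add, map_add, map_zero, hπ, hπ, hπ] at h
      exact h
    have h00 : μ (b ξ₀ ξ₀) = 0 := by
      have hk := key ξ₀ ξ₀ ξ₀
      rw [← add_smul, ← add_smul] at hk
      have h2 := cancel _ hk
      have : (3:ℂ) * μ (b ξ₀ ξ₀) = 0 := by linear_combination h2
      simpa using this
    have h0 : ∀ ζ : M, μ (b ζ ξ₀) = 0 := by
      intro ζ
      have hk := key ζ ξ₀ ξ₀
      rw [h00, zero_smul, add_zero, hb_symm ξ₀ ζ, ← add_smul] at hk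
      have h2 := cancel _ hk
      have : (2:ℂ) * μ (b ζ ξ₀) = 0 := by linear_combination h2
      simpa using this
    have hk := key ξ η ξ₀
    rw [h0 η, hb_symm ξ₀ ξ, h0 ξ, zero_smul, zero_smul, add_zero, add_zero] at hk
    exact cancel _ hk
end

section
/- Let 𝔤 = 𝔤₀ ⊕ 𝔤₁ be a Lie superalgebra over ℂ encoded in components, with 𝔤₀ solvable. Let 𝔥₁ ⊆ 𝔨₁ ⊆ 𝔤₁ be 𝔤₀-submodules with dim(𝔨₁/𝔥₁) = 1, and let λ : 𝔤₀ → ℂ be the weight of the one-dimensional 𝔤₀-module 𝔨₁/𝔥₁, i.e. x•ξ − λ(x)·ξ ∈ 𝔥₁ for all x ∈ 𝔤₀ and all ξ ∈ 𝔨₁. Then λ(⁅x,y⁆) = 0 for all x, y ∈ 𝔤₀ and λ(b(ξ,η)) = 0 for all ξ, η ∈ 𝔨₁; that is, λ extended by zero on 𝔨₁ is a character of the subalgebra 𝔨 = 𝔤₀ ⊕ 𝔨₁. -/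
/-- Let `𝔤 = 𝔤₀ ⊕ 𝔤₁` be a Lie superalgebra over `ℂ` encoded in
components (`L` is `𝔤₀`, `M` is `𝔤₁`, `b` is the bracket of two odd elements), with
`𝔤₀` solvable.  Let `h₁ ⊆ k₁ ⊆ 𝔤₁` be `𝔤₀`-submodules with `dim (k₁/h₁) = 1`, and
let `l : 𝔤₀ → ℂ` be the weight of the one-dimensional `𝔤₀`-module `k₁/h₁`.  Then
`l(⁅x,y⁆) = 0` for all `x y ∈ 𝔤₀` and `l(b(ξ,η)) = 0` for all `ξ η ∈ k₁`; that is,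
`l` extended by zero on `k₁` is a character of the subalgebra `𝔨 = 𝔤₀ ⊕ k₁`. -/
theorem zero_extension_of_weight_is_character_of_subalgebra
    (L : Type) [LieRing L] [LieAlgebra ℂ L] [FiniteDimensional ℂ L]
    [LieAlgebra.IsSolvable L]
    (M : Type) [AddCommGroup M] [Module ℂ M] [FiniteDimensional ℂ M]
    [LieRingModule L M] [LieModule ℂ L M]
    (b : M →ₗ[ℂ] M →ₗ[ℂ] L)
    (hb_symm : ∀ ξ η : M, b ξ η = b η ξ)
    (hb_equivariant : ∀ (x : L) (ξ η : M), ⁅x, b ξ η⁆ = b ⁅x, ξ⁆ η + b ξ ⁅x, η⁆)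
    (hb_jacobi : ∀ ξ η ζ : M, ⁅b ξ η, ζ⁆ + ⁅b η ζ, ξ⁆ + ⁅b ζ ξ, η⁆ = 0)
    (h₁ k₁ : Submodule ℂ M) (hsub : h₁ ≤ k₁)
    (hh₁ : ∀ (x : L), ∀ ξ ∈ h₁, ⁅x, ξ⁆ ∈ h₁)
    (hk₁ : ∀ (x : L), ∀ ξ ∈ k₁, ⁅x, ξ⁆ ∈ k₁)
    (hdim : Module.finrank ℂ (↥k₁ ⧸ h₁.comap k₁.subtype) = 1)
    (l : L →ₗ[ℂ] ℂ)
    (hl : ∀ (x : L), ∀ ξ ∈ k₁, ⁅x, ξ⁆ - l x • ξ ∈ h₁) :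
    (∀ x y : L, l ⁅x, y⁆ = 0) ∧ (∀ ξ ∈ k₁, ∀ η ∈ k₁, l (b ξ η) = 0) := by
  -- Obtain ζ ∈ k₁ with ζ ∉ h₁
  obtain ⟨ζ, hζk, hζh⟩ : ∃ ζ : M, ζ ∈ k₁ ∧ ζ ∉ h₁ := by
    by_contra h
    push_neg at h
    have htop : h₁.comap k₁.subtype = ⊤ := by
      ext ⟨ξ, hξ⟩
      simp only [Submodule.mem_comap, Submodule.mem_top, iff_true]
      exact h ξ hξ
    rw [htop] at hdim
    have : Subsingleton (↥k₁ ⧸ (⊤ : Submodule ℂ ↥k₁)) :=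
      Submodule.Quotient.subsingleton_iff.mpr rfl
    rw [Module.finrank_zero_of_subsingleton] at hdim
    exact one_ne_zero hdim.symm
  -- scalars killing ζ mod h₁ vanish
  have hsc : ∀ c : ℂ, c • ζ ∈ h₁ → c = 0 := by
    intro c hc
    by_contra hc0
    exact hζh (by simpa [smul_smul, inv_mul_cancel₀ hc0] using h₁.smul_mem c⁻¹ hc)
  -- l x = 0 whenever ⁅x, ζ⁆ ∈ h₁
  have hlam : ∀ x : L, ⁅x, ζ⁆ ∈ h₁ → l x = 0 := by
    intro x hx
    apply hsc
    have := h₁.sub_mem hx (hl x ζ hζk)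
    simpa using this
  -- if l x = 0 then ⁅x, ξ⁆ ∈ h₁ for every ξ ∈ k₁
  have hbr : ∀ (x : L) (ξ : M), ξ ∈ k₁ → l x = 0 → ⁅x, ξ⁆ ∈ h₁ := by
    intro x ξ hξ hx0
    have := hl x ξ hξ
    rw [hx0, zero_smul, sub_zero] at this
    exact this
  -- key step: ⁅x, ⁅y, ζ⁆⁆ - (l x * l y) • ζ ∈ h₁
  have hstep : ∀ x y : L, ⁅x, ⁅y, ζ⁆⁆ - (l x * l y) • ζ ∈ h₁ := by
    intro x y
    have h1 : ⁅x, ⁅y, ζ⁆ - l y • ζ⁆ ∈ h₁ := hh₁ x _ (hl y ζ hζk)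
    have h2 : (l y : ℂ) • (⁅x, ζ⁆ - l x • ζ) ∈ h₁ := h₁.smul_mem _ (hl x ζ hζk)
    have h3 := h₁.add_mem h1 h2
    have heq : ⁅x, ⁅y, ζ⁆ - l y • ζ⁆ + (l y : ℂ) • (⁅x, ζ⁆ - l x • ζ)
        = ⁅x, ⁅y, ζ⁆⁆ - (l x * l y) • ζ := by
      rw [lie_sub, lie_smul]
      rw [smul_sub, smul_smul, mul_comm (l y) (l x)]
      abel
    rwa [heq] at h3
  constructor
  · -- l ⁅x, y⁆ = 0
    intro x y
    apply hlam
    have := h₁.sub_mem (hstep x y) (hstep y x)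
    have heq : (⁅x, ⁅y, ζ⁆⁆ - (l x * l y) • ζ) - (⁅y, ⁅x, ζ⁆⁆ - (l y * l x) • ζ)
        = ⁅⁅x, y⁆, ζ⁆ := by
      rw [lie_lie, mul_comm (l y) (l x)]
      abel
    rwa [heq] at this
  · -- l (b ξ η) = 0
    -- first: l (b ζ ζ) = 0
    have hζζ : l (b ζ ζ) = 0 := by
      apply hlam
      have hj := hb_jacobi ζ ζ ζ
      have h3 : (3 : ℂ) • ⁅b ζ ζ, ζ⁆ = 0 := by
        rw [show (3 : ℂ) = 1 + 1 + 1 by norm_num, add_smul, add_smul, one_smul]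
        linear_combination (norm := abel) hj
      have : ⁅b ζ ζ, ζ⁆ = 0 := by
        rcases smul_eq_zero.mp h3 with h | h
        · norm_num at h
        · exact h
      rw [this]; exact h₁.zero_mem
    -- second: l (b ξ ζ) = 0 for ξ ∈ k₁
    have hξζ : ∀ ξ ∈ k₁, l (b ξ ζ) = 0 := by
      intro ξ hξ
      apply hlam
      have hj := hb_jacobi ξ ζ ζ
      rw [hb_symm ζ ξ] at hj
      have hmem : ⁅b ζ ζ, ξ⁆ ∈ h₁ := hbr _ _ hξ hζζ
      have h2 : (2 : ℂ) • ⁅b ξ ζ, ζ⁆ = -⁅b ζ ζ, ξ⁆ := by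
        rw [show (2 : ℂ) = 1 + 1 by norm_num, add_smul, one_smul]
        linear_combination (norm := abel) hj
      have : ⁅b ξ ζ, ζ⁆ = -(((2 : ℂ)⁻¹) • ⁅b ζ ζ, ξ⁆) := by
        have := congrArg (fun m => ((2 : ℂ)⁻¹) • m) h2
        simpa [smul_smul, smul_neg, neg_smul] using this
      rw [this]
      exact h₁.neg_mem (h₁.smul_mem _ hmem)
    -- general case
    intro ξ hξ η hη
    apply hlam
    have hj := hb_jacobi ξ η ζ
    have hm1 : ⁅b η ζ, ξ⁆ ∈ h₁ := hbr _ _ hξ (hξζ η hη)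
    have hm2 : ⁅b ζ ξ, η⁆ ∈ h₁ := by
      rw [hb_symm ζ ξ]
      exact hbr _ _ hη (hξζ ξ hξ)
    have : ⁅b ξ η, ζ⁆ = -⁅b η ζ, ξ⁆ - ⁅b ζ ξ, η⁆ := by
      linear_combination (norm := abel) hj
    rw [this]
    exact h₁.sub_mem (h₁.neg_mem hm1) hm2
end

section
/- Let 𝔤 = 𝔤₀ ⊕ 𝔤₁ be a Lie superalgebra over ℂ encoded in components, with 𝔤₀ solvable. Let 𝔨₁ ⊆ 𝔤₁ be a 𝔤₀-submodule with dim(𝔤₁/𝔨₁) = 1 and fix ξ ∈ 𝔤₁ with ξ ∉ 𝔨₁. Let W = (W₀, W₁, σ, τ) be an irreducible 𝔤-module (in components), and let (V₀, V₁) be a pair of subspaces V₀ ⊆ W₀, V₁ ⊆ W₁, invariant under the 𝔤₀-action and under σ(η) and τ(η) for all η ∈ 𝔨₁, which is nonzero, a proper subspace pair of (W₀, W₁), and irreducible as a module over the subalgebra 𝔨 = 𝔤₀ ⊕ 𝔨₁. Then W₀ = V₀ ⊕ τ(ξ)(V₁) and W₁ = V₁ ⊕ σ(ξ)(V₀) as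 internal direct sums of vector spaces (i.e., W is the module induced from V: W = Ind^𝔤_𝔨(V)). -/
/-- Let `𝔤 = 𝔤₀ ⊕ 𝔤₁` be a Lie superalgebra over `ℂ` encoded in
components (`L` is `𝔤₀`, `M` is `𝔤₁`, `b` is the bracket of two odd elements), with
`𝔤₀` solvable.  Let `k₁ ⊆ 𝔤₁` be a `𝔤₀`-submodule with `dim (𝔤₁/k₁) = 1`, and fix
`ξ ∈ 𝔤₁ \ k₁`.  Let `W = (W₀, W₁, σ, τ)` be an irreducible `𝔤`-module in components
and `(V₀, V₁)` a pair of subspaces invariant under `𝔤₀` and under `σ(η)`, `τ(η)` for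
all `η ∈ k₁`, which is nonzero, proper, and irreducible over the subalgebra
`𝔨 = 𝔤₀ ⊕ k₁`.  Then `W₀ = V₀ ⊕ τ(ξ)(V₁)` and `W₁ = V₁ ⊕ σ(ξ)(V₀)` as internal
direct sums, i.e. `W = Ind^𝔤_𝔨 V`. -/
theorem irreducible_module_is_induced_from_codim_one
    (L : Type) [LieRing L] [LieAlgebra ℂ L] [FiniteDimensional ℂ L]
    [LieAlgebra.IsSolvable L]
    (M : Type) [AddCommGroup M] [Module ℂ M] [FiniteDimensional ℂ M]
    [LieRingModule L M] [LieModule ℂ L M]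
    (b : M →ₗ[ℂ] M →ₗ[ℂ] L)
    (hb_symm : ∀ ξ η : M, b ξ η = b η ξ)
    (hb_equivariant : ∀ (x : L) (ξ η : M), ⁅x, b ξ η⁆ = b ⁅x, ξ⁆ η + b ξ ⁅x, η⁆)
    (hb_jacobi : ∀ ξ η ζ : M, ⁅b ξ η, ζ⁆ + ⁅b η ζ, ξ⁆ + ⁅b ζ ξ, η⁆ = 0)
    (k₁ : Submodule ℂ M)
    (hk₁ : ∀ (x : L), ∀ η ∈ k₁, ⁅x, η⁆ ∈ k₁)
    (hdim : Module.finrank ℂ (M ⧸ k₁) = 1)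
    (ξ : M) (hξ : ξ ∉ k₁)
    -- the 𝔤-module W = (W₀, W₁, σ, τ) in components
    (W₀ : Type) [AddCommGroup W₀] [Module ℂ W₀] [FiniteDimensional ℂ W₀]
    [LieRingModule L W₀] [LieModule ℂ L W₀]
    (W₁ : Type) [AddCommGroup W₁] [Module ℂ W₁] [FiniteDimensional ℂ W₁]
    [LieRingModule L W₁] [LieModule ℂ L W₁]
    (σ : M →ₗ[ℂ] W₀ →ₗ[ℂ] W₁) (τ : M →ₗ[ℂ] W₁ →ₗ[ℂ] W₀)
    (hσ : ∀ (x : L) (η : M) (w : W₀), σ ⁅x, η⁆ w = ⁅x, σ η w⁆ - σ η ⁅x, w⁆)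
    (hτ : ∀ (x : L) (η : M) (w : W₁), τ ⁅x, η⁆ w = ⁅x, τ η w⁆ - τ η ⁅x, w⁆)
    (hτσ : ∀ (η ζ : M) (w : W₀), τ ζ (σ η w) + τ η (σ ζ w) = ⁅b η ζ, w⁆)
    (hστ : ∀ (η ζ : M) (w : W₁), σ ζ (τ η w) + σ η (τ ζ w) = ⁅b η ζ, w⁆)
    -- W is irreducible as a 𝔤-module
    (hirr : ∀ (U₀ : Submodule ℂ W₀) (U₁ : Submodule ℂ W₁),
      (∀ (x : L), ∀ w ∈ U₀, ⁅x, w⁆ ∈ U₀) → (∀ (x : L), ∀ w ∈ U₁, ⁅x, w⁆ ∈ U₁) →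
      (∀ (η : M), ∀ w ∈ U₀, σ η w ∈ U₁) → (∀ (η : M), ∀ w ∈ U₁, τ η w ∈ U₀) →
      (U₀ = ⊥ ∧ U₁ = ⊥) ∨ (U₀ = ⊤ ∧ U₁ = ⊤))
    -- (V₀, V₁) is a 𝔨-submodule of W, where 𝔨 = 𝔤₀ ⊕ k₁
    (V₀ : Submodule ℂ W₀) (V₁ : Submodule ℂ W₁)
    (hV₀L : ∀ (x : L), ∀ w ∈ V₀, ⁅x, w⁆ ∈ V₀)
    (hV₁L : ∀ (x : L), ∀ w ∈ V₁, ⁅x, w⁆ ∈ V₁)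
    (hV₀σ : ∀ η ∈ k₁, ∀ w ∈ V₀, σ η w ∈ V₁)
    (hV₁τ : ∀ η ∈ k₁, ∀ w ∈ V₁, τ η w ∈ V₀)
    -- which is nonzero and proper
    (hV_ne_bot : ¬(V₀ = ⊥ ∧ V₁ = ⊥))
    (hV_ne_top : ¬(V₀ = ⊤ ∧ V₁ = ⊤))
    -- and irreducible as a 𝔨-module
    (hVirr : ∀ (U₀ : Submodule ℂ W₀) (U₁ : Submodule ℂ W₁), U₀ ≤ V₀ → U₁ ≤ V₁ →
      (∀ (x : L), ∀ w ∈ U₀, ⁅x, w⁆ ∈ U₀) → (∀ (x : L), ∀ w ∈ U₁, ⁅x, w⁆ ∈ U₁) →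
      (∀ η ∈ k₁, ∀ w ∈ U₀, σ η w ∈ U₁) → (∀ η ∈ k₁, ∀ w ∈ U₁, τ η w ∈ U₀) →
      (U₀ = ⊥ ∧ U₁ = ⊥) ∨ (U₀ = V₀ ∧ U₁ = V₁)) :
    (V₀ ⊔ V₁.map (τ ξ) = ⊤ ∧ V₀ ⊓ V₁.map (τ ξ) = ⊥) ∧
    (V₁ ⊔ V₀.map (σ ξ) = ⊤ ∧ V₁ ⊓ V₀.map (σ ξ) = ⊥) := by
    classical
  -- Every element of M decomposes as c • ξ + (element of k₁)
  have hdec : ∀ ζ : M, ∃ c : ℂ, ζ - c • ξ ∈ k₁ := by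
    intro ζ
    have hq : (k₁.mkQ) ξ ≠ 0 := by
      simpa [Submodule.mkQ_apply, Submodule.Quotient.mk_eq_zero] using hξ
    obtain ⟨c, hc⟩ := (finrank_eq_one_iff_of_nonzero' (k₁.mkQ ξ) hq).mp hdim (k₁.mkQ ζ)
    refine ⟨c, ?_⟩
    have : k₁.mkQ (ζ - c • ξ) = 0 := by
      rw [map_sub, map_smul, hc, sub_self]
    rwa [Submodule.mkQ_apply, Submodule.Quotient.mk_eq_zero] at this
  -- σ ξ ∘ τ ξ and τ ξ ∘ σ ξ act by b ξ ξ / 2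
  have hσξτξ : ∀ v ∈ V₁, σ ξ (τ ξ v) ∈ V₁ := by
    intro v hv
    have h2 : σ ξ (τ ξ v) + σ ξ (τ ξ v) = ⁅b ξ ξ, v⁆ := hστ ξ ξ v
    have h3 : σ ξ (τ ξ v) = (2⁻¹ : ℂ) • ⁅b ξ ξ, v⁆ := by
      have : (2 : ℂ) • σ ξ (τ ξ v) = ⁅b ξ ξ, v⁆ := by
        rw [two_smul]; exact h2
      rw [← this, smul_smul]; norm_num
    rw [h3]
    exact V₁.smul_mem _ (hV₁L _ _ hv)
  have hτξσξ : ∀ w ∈ V₀, τ ξ (σ ξ w) ∈ V₀ := by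
    intro w hw
    have h2 : τ ξ (σ ξ w) + τ ξ (σ ξ w) = ⁅b ξ ξ, w⁆ := hτσ ξ ξ w
    have h3 : τ ξ (σ ξ w) = (2⁻¹ : ℂ) • ⁅b ξ ξ, w⁆ := by
      have : (2 : ℂ) • τ ξ (σ ξ w) = ⁅b ξ ξ, w⁆ := by
        rw [two_smul]; exact h2
      rw [← this, smul_smul]; norm_num
    rw [h3]
    exact V₀.smul_mem _ (hV₀L _ _ hw)
  -- abbreviations
  set U₀ : Submodule ℂ W₀ := V₀ ⊔ V₁.map (τ ξ) with hU₀def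
  set U₁ : Submodule ℂ W₁ := V₁ ⊔ V₀.map (σ ξ) with hU₁def
  -- rearranged structure identities
  have hτ' : ∀ (x : L) (v : W₁), ⁅x, τ ξ v⁆ = τ ⁅x, ξ⁆ v + τ ξ ⁅x, v⁆ := by
    intro x v; rw [hτ x ξ v]; abel
  have hσ' : ∀ (x : L) (w : W₀), ⁅x, σ ξ w⁆ = σ ⁅x, ξ⁆ w + σ ξ ⁅x, w⁆ := by
    intro x w; rw [hσ x ξ w]; abel
  -- U₀, U₁ form a 𝔤-submodule of W
  have hU₀L : ∀ (x : L), ∀ w ∈ U₀, ⁅x, w⁆ ∈ U₀ := by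
    intro x w hw
    obtain ⟨a, ha, z, hz, rfl⟩ := Submodule.mem_sup.mp hw
    obtain ⟨v, hv, rfl⟩ := Submodule.mem_map.mp hz
    obtain ⟨c, hc⟩ := hdec ⁅x, ξ⁆
    have hid : ⁅x, a + τ ξ v⁆
        = (⁅x, a⁆ + τ (⁅x, ξ⁆ - c • ξ) v) + τ ξ (c • v + ⁅x, v⁆) := by
      rw [lie_add, hτ' x v]
      simp only [map_sub, map_smul, LinearMap.sub_apply, LinearMap.smul_apply, map_add]
      abel
    rw [hid]
    exact add_mem
      (Submodule.mem_sup_left (add_mem (hV₀L x a ha) (hV₁τ _ hc v hv)))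
      (Submodule.mem_sup_right (Submodule.mem_map_of_mem
        (add_mem (V₁.smul_mem c hv) (hV₁L x v hv))))
  have hU₁L : ∀ (x : L), ∀ w ∈ U₁, ⁅x, w⁆ ∈ U₁ := by
    intro x w hw
    obtain ⟨a, ha, z, hz, rfl⟩ := Submodule.mem_sup.mp hw
    obtain ⟨v, hv, rfl⟩ := Submodule.mem_map.mp hz
    obtain ⟨c, hc⟩ := hdec ⁅x, ξ⁆
    have hid : ⁅x, a + σ ξ v⁆
        = (⁅x, a⁆ + σ (⁅x, ξ⁆ - c • ξ) v) + σ ξ (c • v + ⁅x, v⁆) := by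
      rw [lie_add, hσ' x v]
      simp only [map_sub, map_smul, LinearMap.sub_apply, LinearMap.smul_apply, map_add]
      abel
    rw [hid]
    exact add_mem
      (Submodule.mem_sup_left (add_mem (hV₁L x a ha) (hV₀σ _ hc v hv)))
      (Submodule.mem_sup_right (Submodule.mem_map_of_mem
        (add_mem (V₀.smul_mem c hv) (hV₀L x v hv))))
  have hU₀σ : ∀ (ζ : M), ∀ w ∈ U₀, σ ζ w ∈ U₁ := by
    intro ζ w hw
    obtain ⟨a, ha, z, hz, rfl⟩ := Submodule.mem_sup.mp hw
    obtain ⟨c, hc⟩ := hdec ζ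
    obtain ⟨v, hv, rfl⟩ := Submodule.mem_map.mp hz
    have m1 : σ ζ a ∈ U₁ := by
      have hid : σ ζ a = σ (ζ - c • ξ) a + σ ξ (c • a) := by
        simp only [map_sub, map_smul, LinearMap.sub_apply, LinearMap.smul_apply]
        abel
      rw [hid]
      exact add_mem (Submodule.mem_sup_left (hV₀σ _ hc a ha))
        (Submodule.mem_sup_right (Submodule.mem_map_of_mem (V₀.smul_mem c ha)))
    have m2 : σ ζ (τ ξ v) ∈ U₁ := by
      have key : σ (ζ - c • ξ) (τ ξ v) + σ ξ (τ (ζ - c • ξ) v) = ⁅b ξ (ζ - c • ξ), v⁆ :=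
        hστ ξ (ζ - c • ξ) v
      have hid : σ ζ (τ ξ v)
          = (c • σ ξ (τ ξ v) + ⁅b ξ (ζ - c • ξ), v⁆) - σ ξ (τ (ζ - c • ξ) v) := by
        rw [← key]
        simp only [map_sub, map_smul, LinearMap.sub_apply, LinearMap.smul_apply]
        abel
      rw [hid]
      refine sub_mem (add_mem ?_ ?_) ?_
      · exact Submodule.mem_sup_left (V₁.smul_mem c (hσξτξ v hv))
      · exact Submodule.mem_sup_left (hV₁L _ _ hv)
      · exact Submodule.mem_sup_right (Submodule.mem_map_of_mem (hV₁τ _ hc v hv))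
    rw [map_add]
    exact add_mem m1 m2
  have hU₁τ : ∀ (ζ : M), ∀ w ∈ U₁, τ ζ w ∈ U₀ := by
    intro ζ w hw
    obtain ⟨a, ha, z, hz, rfl⟩ := Submodule.mem_sup.mp hw
    obtain ⟨c, hc⟩ := hdec ζ
    obtain ⟨v, hv, rfl⟩ := Submodule.mem_map.mp hz
    have m1 : τ ζ a ∈ U₀ := by
      have hid : τ ζ a = τ (ζ - c • ξ) a + τ ξ (c • a) := by
        simp only [map_sub, map_smul, LinearMap.sub_apply, LinearMap.smul_apply]
        abel
      rw [hid]
      exact add_mem (Submodule.mem_sup_left (hV₁τ _ hc a ha))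
        (Submodule.mem_sup_right (Submodule.mem_map_of_mem (V₁.smul_mem c ha)))
    have m2 : τ ζ (σ ξ v) ∈ U₀ := by
      have key : τ (ζ - c • ξ) (σ ξ v) + τ ξ (σ (ζ - c • ξ) v) = ⁅b ξ (ζ - c • ξ), v⁆ :=
        hτσ ξ (ζ - c • ξ) v
      have hid : τ ζ (σ ξ v)
          = (c • τ ξ (σ ξ v) + ⁅b ξ (ζ - c • ξ), v⁆) - τ ξ (σ (ζ - c • ξ) v) := by
        rw [← key]
        simp only [map_sub, map_smul, LinearMap.sub_apply, LinearMap.smul_apply]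
        abel
      rw [hid]
      refine sub_mem (add_mem ?_ ?_) ?_
      · exact Submodule.mem_sup_left (V₀.smul_mem c (hτξσξ v hv))
      · exact Submodule.mem_sup_left (hV₀L _ _ hv)
      · exact Submodule.mem_sup_right (Submodule.mem_map_of_mem (hV₀σ _ hc v hv))
    rw [map_add]
    exact add_mem m1 m2
  -- hence U = ⊤
  have hUtop : U₀ = ⊤ ∧ U₁ = ⊤ := by
    rcases hirr U₀ U₁ hU₀L hU₁L hU₀σ hU₁τ with ⟨h0, h1⟩ | h
    · exfalso
      apply hV_ne_bot
      constructor
      · exact le_bot_iff.mp (h0 ▸ (le_sup_left : V₀ ≤ U₀))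
      · exact le_bot_iff.mp (h1 ▸ (le_sup_left : V₁ ≤ U₁))
    · exact h
  -- the "defect" submodules
  set D₀ : Submodule ℂ W₀ := V₀ ⊓ V₁.comap (σ ξ) with hD₀def
  set D₁ : Submodule ℂ W₁ := V₁ ⊓ V₀.comap (τ ξ) with hD₁def
  have hD₀L : ∀ (x : L), ∀ w ∈ D₀, ⁅x, w⁆ ∈ D₀ := by
    rintro x w ⟨hw, hw'⟩
    refine ⟨hV₀L x w hw, ?_⟩
    obtain ⟨c, hc⟩ := hdec ⁅x, ξ⁆
    have hid : σ ξ ⁅x, w⁆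
        = ⁅x, σ ξ w⁆ - (σ (⁅x, ξ⁆ - c • ξ) w + c • σ ξ w) := by
      rw [hσ' x w]
      simp only [map_sub, map_smul, LinearMap.sub_apply, LinearMap.smul_apply]
      abel
    show σ ξ ⁅x, w⁆ ∈ V₁
    rw [hid]
    exact sub_mem (hV₁L x _ hw')
      (add_mem (hV₀σ _ hc w hw) (V₁.smul_mem c hw'))
  have hD₁L : ∀ (x : L), ∀ v ∈ D₁, ⁅x, v⁆ ∈ D₁ := by
    rintro x v ⟨hv, hv'⟩
    refine ⟨hV₁L x v hv, ?_⟩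
    obtain ⟨c, hc⟩ := hdec ⁅x, ξ⁆
    have hid : τ ξ ⁅x, v⁆
        = ⁅x, τ ξ v⁆ - (τ (⁅x, ξ⁆ - c • ξ) v + c • τ ξ v) := by
      rw [hτ' x v]
      simp only [map_sub, map_smul, LinearMap.sub_apply, LinearMap.smul_apply]
      abel
    show τ ξ ⁅x, v⁆ ∈ V₀
    rw [hid]
    exact sub_mem (hV₀L x _ hv')
      (add_mem (hV₁τ _ hc v hv) (V₀.smul_mem c hv'))
  have hD₀σ : ∀ η ∈ k₁, ∀ w ∈ D₀, σ η w ∈ D₁ := by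
    rintro η hη w ⟨hw, hw'⟩
    refine ⟨hV₀σ _ hη w hw, ?_⟩
    have key : τ ξ (σ η w) + τ η (σ ξ w) = ⁅b η ξ, w⁆ := hτσ η ξ w
    have hid : τ ξ (σ η w) = ⁅b η ξ, w⁆ - τ η (σ ξ w) := by
      rw [← key]; abel
    show τ ξ (σ η w) ∈ V₀
    rw [hid]
    exact sub_mem (hV₀L _ _ hw) (hV₁τ _ hη _ hw')
  have hD₁τ : ∀ η ∈ k₁, ∀ v ∈ D₁, τ η v ∈ D₀ := by
    rintro η hη v ⟨hv, hv'⟩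
    refine ⟨hV₁τ _ hη v hv, ?_⟩
    have key : σ ξ (τ η v) + σ η (τ ξ v) = ⁅b η ξ, v⁆ := hστ η ξ v
    have hid : σ ξ (τ η v) = ⁅b η ξ, v⁆ - σ η (τ ξ v) := by
      rw [← key]; abel
    show σ ξ (τ η v) ∈ V₁
    rw [hid]
    exact sub_mem (hV₁L _ _ hv) (hV₀σ _ hη _ hv')
  -- D is ⊥ or V; V case impossible
  have hDbot : D₀ = ⊥ ∧ D₁ = ⊥ := by
    rcases hVirr D₀ D₁ inf_le_left inf_le_left hD₀L hD₁L hD₀σ hD₁τ with h | ⟨h0, h1⟩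
    · exact h
    · exfalso
      -- then V itself is a 𝔤-submodule, contradiction
      have hVσ : ∀ (ζ : M), ∀ w ∈ V₀, σ ζ w ∈ V₁ := by
        intro ζ w hw
        obtain ⟨c, hc⟩ := hdec ζ
        have hξw : σ ξ w ∈ V₁ := by
          have : w ∈ D₀ := h0 ▸ hw
          exact this.2
        have hid : σ ζ w = σ (ζ - c • ξ) w + c • σ ξ w := by
          simp only [map_sub, map_smul, LinearMap.sub_apply, LinearMap.smul_apply]
          abel
        rw [hid]
        exact add_mem (hV₀σ _ hc w hw) (V₁.smul_mem c hξw)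
      have hVτ : ∀ (ζ : M), ∀ v ∈ V₁, τ ζ v ∈ V₀ := by
        intro ζ v hv
        obtain ⟨c, hc⟩ := hdec ζ
        have hξv : τ ξ v ∈ V₀ := by
          have : v ∈ D₁ := h1 ▸ hv
          exact this.2
        have hid : τ ζ v = τ (ζ - c • ξ) v + c • τ ξ v := by
          simp only [map_sub, map_smul, LinearMap.sub_apply, LinearMap.smul_apply]
          abel
        rw [hid]
        exact add_mem (hV₁τ _ hc v hv) (V₀.smul_mem c hξv)
      rcases hirr V₀ V₁ hV₀L hV₁L hVσ hVτ with h | h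
      · exact hV_ne_bot h
      · exact hV_ne_top h
  -- conclude
  refine ⟨⟨hUtop.1, ?_⟩, ⟨hUtop.2, ?_⟩⟩
  · rw [eq_bot_iff]
    rintro u ⟨hu₀, hu₁⟩
    obtain ⟨v, hv, rfl⟩ := Submodule.mem_map.mp hu₁
    have : v ∈ D₁ := ⟨hv, hu₀⟩
    rw [hDbot.2] at this
    obtain rfl := (Submodule.mem_bot ℂ).mp this
    simp
  · rw [eq_bot_iff]
    rintro u ⟨hu₁, hu₀⟩
    obtain ⟨w, hw, rfl⟩ := Submodule.mem_map.mp hu₀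
    have : w ∈ D₀ := ⟨hw, hu₁⟩
    rw [hDbot.1] at this
    obtain rfl := (Submodule.mem_bot ℂ).mp this
    simp
end

section
/- Let 𝔤 be a finite-dimensional solvable Lie algebra over ℂ, W a finite-dimensional 𝔤-module, f a symmetric bilinear form on W that is 𝔤-invariant (f(x•w, w') + f(w, x•w') = 0 for all x ∈ 𝔤 and w, w' ∈ W), and V ⊆ W a 𝔤-submodule with f(V, V) = 0. Then there exists a 𝔤-submodule V' of W with V ⊆ V', f(V', V') = 0, and V' maximal among all subspaces U ⊆ W with f(U, U) = 0. -/
open Module LinearMap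

open Module LinearMap FiniteDimensional

section WeightInvariance

variable {L : Type} [LieRing L] [LieAlgebra ℂ L]
variable {V : Type} [AddCommGroup V] [Module ℂ V] [FiniteDimensional ℂ V]
variable [LieRingModule L V] [LieModule ℂ L V]

/-- Key lemma for Lie's theorem: the simultaneous eigenspace of an "ideal-like" subspace
`A` is invariant under the action of all of `L`. -/
lemma weight_space_invariant (A : Submodule ℂ L)
    (hA : ∀ (x : L), ∀ a ∈ A, ⁅x, a⁆ ∈ A) (χ : A → ℂ) (w : V)
    (hw : ∀ a : A, ⁅(a : L), w⁆ = χ a • w) (z : L) :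
    ∀ a : A, ⁅(a : L), ⁅z, w⁆⁆ = χ a • ⁅z, w⁆ := by
  rcases eq_or_ne w 0 with rfl | hw0
  · simp
  set T : Module.End ℂ V := LieModule.toEnd ℂ L V z with hT
  have hTapp : ∀ v : V, T v = ⁅z, v⁆ := fun v => rfl
  set F : ℕ → V := fun j => (T ^ j) w with hF
  have hF0 : F 0 = w := rfl
  have hFsucc : ∀ j, F (j + 1) = ⁅z, F j⁆ := by
    intro j
    show (T ^ (j + 1)) w = ⁅z, (T ^ j) w⁆
    rw [pow_succ']
    rfl
  set Uk : ℕ → Submodule ℂ V := fun k => Submodule.span ℂ (F '' Set.Iio k) with hUk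
  have hUmono : Monotone Uk := fun i j hij =>
    Submodule.span_mono (Set.image_mono (fun t ht => lt_of_lt_of_le ht hij))
  have hFmem : ∀ j k, j < k → F j ∈ Uk k := fun j k hjk =>
    Submodule.subset_span ⟨j, hjk, rfl⟩
  -- the key filtration claim
  have claim1 : ∀ j (a : L) (ha : a ∈ A), ⁅a, F j⁆ - χ ⟨a, ha⟩ • F j ∈ Uk j := by
    intro j
    induction j with
    | zero => intro a ha; rw [hF0, hw ⟨a, ha⟩, sub_self]; exact zero_mem _
    | succ j ih =>
      intro a ha
      have hb : ⁅a, z⁆ ∈ A := by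
        rw [← lie_skew]
        exact A.neg_mem (hA z a ha)
      have key : ⁅a, F (j + 1)⁆ - χ ⟨a, ha⟩ • F (j + 1) =
          (⁅⁅a, z⁆, F j⁆ - χ ⟨⁅a, z⁆, hb⟩ • F j) + χ ⟨⁅a, z⁆, hb⟩ • F j +
            (⁅z, ⁅a, F j⁆ - χ ⟨a, ha⟩ • F j⁆) := by
        rw [hFsucc j, lie_lie, lie_sub, lie_smul]
        abel
      rw [key]
      refine add_mem (add_mem ?_ ?_) ?_
      · exact hUmono (Nat.le_succ j) (ih ⁅a, z⁆ hb)
      · exact Submodule.smul_mem _ _ (hFmem j (j + 1) (Nat.lt_succ_self j))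
      · -- z-image of Uk j is in Uk (j+1)
        have h2 : ∀ v ∈ Uk j, ⁅z, v⁆ ∈ Uk (j + 1) := by
          intro v hv
          induction hv using Submodule.span_induction with
          | mem x hx =>
            obtain ⟨i, hi, rfl⟩ := hx
            rw [Set.mem_Iio] at hi
            rw [← hFsucc i]
            exact hFmem _ _ (by omega)
          | zero => rw [lie_zero]; exact zero_mem _
          | add x y _ _ hx hy => rw [lie_add]; exact add_mem hx hy
          | smul c x _ hx => rw [lie_smul]; exact Submodule.smul_mem _ _ hx
        exact h2 _ (ih a ha)
  -- filtration stabilizes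
  obtain ⟨D, hD⟩ : ∃ D, Uk D = Uk (D + 1) := by
    by_contra h
    push_neg at h
    have key : ∀ k, k ≤ finrank ℂ (Uk k) := by
      intro k
      induction k with
      | zero => exact Nat.zero_le _
      | succ k ih =>
        have hlt : Uk k < Uk (k + 1) := lt_of_le_of_ne (hUmono (Nat.le_succ k)) (h k)
        have := Submodule.finrank_lt_finrank_of_lt hlt
        omega
    have h1 := key (finrank ℂ V + 1)
    have h2 := Submodule.finrank_le (Uk (finrank ℂ V + 1))
    omega
  set U : Submodule ℂ V := Uk D with hU
  have hTUk : ∀ k, ∀ v ∈ Uk k, ⁅z, v⁆ ∈ Uk (k + 1) := by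
    intro k v hv
    induction hv using Submodule.span_induction with
    | mem x hx =>
      obtain ⟨i, hi, rfl⟩ := hx
      rw [Set.mem_Iio] at hi
      rw [← hFsucc i]
      exact hFmem _ _ (by omega)
    | zero => rw [lie_zero]; exact zero_mem _
    | add x y _ _ hx hy => rw [lie_add]; exact add_mem hx hy
    | smul c x _ hx => rw [lie_smul]; exact Submodule.smul_mem _ _ hx
  have hTU : ∀ v ∈ U, T v ∈ U := by
    intro v hv
    rw [hTapp]
    have := hTUk D v hv
    rwa [← hD] at this
  have hallF : ∀ j, F j ∈ U := by
    have hge : ∀ j, D ≤ j → F j ∈ U := by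
      intro j hj
      induction j, hj using Nat.le_induction with
      | base =>
        have : F D ∈ Uk (D + 1) := hFmem _ _ (Nat.lt_succ_self D)
        rwa [← hD] at this
      | succ j _ ih =>
        have := hTU _ ih
        rwa [hTapp, ← hFsucc j] at this
    intro j
    rcases lt_or_ge j D with h | h
    · exact hFmem _ _ h
    · exact hge j h
  have hSU : ∀ (a : L), a ∈ A → ∀ v ∈ U, ⁅a, v⁆ ∈ U := by
    intro a ha v hv
    induction hv using Submodule.span_induction with
    | mem x hx =>
      obtain ⟨i, hi, rfl⟩ := hx
      rw [Set.mem_Iio] at hi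
      have h1 : ⁅a, F i⁆ = (⁅a, F i⁆ - χ ⟨a, ha⟩ • F i) + χ ⟨a, ha⟩ • F i := by abel
      rw [h1]
      exact add_mem (hUmono (le_of_lt hi) (claim1 i a ha)) (Submodule.smul_mem _ _ (hallF i))
    | zero => rw [lie_zero]; exact zero_mem _
    | add x y _ _ hx hy => rw [lie_add]; exact add_mem hx hy
    | smul c x _ hx => rw [lie_smul]; exact Submodule.smul_mem _ _ hx
  -- now the trace argument
  have main : ∀ (b : L) (hbA : b ∈ A), ∀ (v : V), v ∈ U →
      (LieModule.toEnd ℂ L V b) v ∈ U := fun b hb v hv => hSU b hb v hv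
  -- trace of the restriction of `toEnd b` to `U` equals `χ b * finrank U`
  have htrace : ∀ (b : L) (hb : b ∈ A),
      trace ℂ U ((LieModule.toEnd ℂ L V b).restrict (main b hb)) =
        χ ⟨b, hb⟩ * finrank ℂ U := by
    intro b hb
    set S : Module.End ℂ V := LieModule.toEnd ℂ L V b with hS
    set N : Module.End ℂ V := S - χ ⟨b, hb⟩ • 1 with hN
    have hNU : ∀ v ∈ U, N v ∈ U := by
      intro v hv
      rw [hN]
      simp only [LinearMap.sub_apply, LinearMap.smul_apply, Module.End.one_apply]
      exact sub_mem (main b hb v hv) (Submodule.smul_mem _ _ hv)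
    have hNlow : ∀ k, ∀ v ∈ Uk (k + 1), N v ∈ Uk k := by
      intro k v hv
      induction hv using Submodule.span_induction with
      | mem x hx =>
        obtain ⟨i, hi, rfl⟩ := hx
        rw [Set.mem_Iio] at hi
        have : N (F i) = ⁅b, F i⁆ - χ ⟨b, hb⟩ • F i := by
          rw [hN]
          simp only [LinearMap.sub_apply, LinearMap.smul_apply, Module.End.one_apply]
          rfl
        rw [this]
        exact hUmono (by omega) (claim1 i b hb)
      | zero => rw [map_zero]; exact zero_mem _
      | add x y _ _ hx hy => rw [map_add]; exact add_mem hx hy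
      | smul c x _ hx => rw [map_smul]; exact Submodule.smul_mem _ _ hx
    have hNnil : ∀ k, ∀ v ∈ Uk k, (N ^ k) v = 0 := by
      intro k
      induction k with
      | zero =>
        intro v hv
        have him : F '' Set.Iio 0 = (∅ : Set V) := by ext v'; simp
        rw [hUk] at hv
        simp only [him, Submodule.span_empty, Submodule.mem_bot] at hv
        rw [hv, map_zero]
      | succ k ih =>
        intro v hv
        rw [pow_succ, Module.End.mul_apply]
        exact ih _ (hNlow k v hv)
    have hrestr : (S.restrict (main b hb)) - χ ⟨b, hb⟩ • 1 = N.restrict hNU := by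
      refine LinearMap.ext fun v => Subtype.ext ?_
      simp only [LinearMap.sub_apply, LinearMap.smul_apply, Module.End.one_apply,
        AddSubgroupClass.coe_sub, SetLike.val_smul, LinearMap.restrict_coe_apply, hN]
    have hnil : IsNilpotent (N.restrict hNU) := by
      refine ⟨D, ?_⟩
      rw [Module.End.pow_restrict]
      ext ⟨v, hv⟩
      simp only [LinearMap.restrict_apply, LinearMap.zero_apply, ZeroMemClass.coe_zero,
        Submodule.coe_mk]
      exact hNnil D v hv
    have h0 : trace ℂ U (N.restrict hNU) = 0 := by
      have := LinearMap.isNilpotent_trace_of_isNilpotent hnil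
      exact this.eq_zero
    have : S.restrict (main b hb) = N.restrict hNU + χ ⟨b, hb⟩ • 1 := by
      rw [← hrestr]; abel
    rw [this, map_add, h0, zero_add, map_smul, trace_one]
    simp [mul_comm]
  -- χ vanishes on brackets ⁅a,z⁆
  have hbrkt : ∀ (a : L) (ha : a ∈ A) (hb : ⁅a, z⁆ ∈ A), χ ⟨⁅a, z⁆, hb⟩ = 0 := by
    intro a ha hb
    have hcomm : LieModule.toEnd ℂ L V ⁅a, z⁆ =
        LieModule.toEnd ℂ L V a * T - T * LieModule.toEnd ℂ L V a := by
      ext v; simp [hTapp]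
    have hres : (LieModule.toEnd ℂ L V ⁅a, z⁆).restrict (main _ hb) =
        (LieModule.toEnd ℂ L V a).restrict (main a ha) * T.restrict hTU -
          T.restrict hTU * (LieModule.toEnd ℂ L V a).restrict (main a ha) := by
      ext ⟨v, hv⟩
      simp only [LinearMap.restrict_apply, LinearMap.sub_apply, Module.End.mul_apply,
        AddSubgroupClass.coe_sub, LinearMap.restrict_coe_apply]
      rw [hcomm]
      simp
    have htr0 : trace ℂ U ((LieModule.toEnd ℂ L V ⁅a, z⁆).restrict (main _ hb)) = 0 := by
      rw [hres, map_sub, trace_mul_comm, sub_self]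
    rw [htrace _ hb] at htr0
    have hU0 : (finrank ℂ U : ℂ) ≠ 0 := by
      have hwU : w ∈ U := by rw [← hF0]; exact hallF 0
      have hnt : Nontrivial U := ⟨⟨w, hwU⟩, 0, by simp [hw0]⟩
      have hpos : 0 < finrank ℂ U := Module.finrank_pos_iff.mpr hnt
      have : finrank ℂ U ≠ 0 := by omega
      exact_mod_cast Nat.cast_ne_zero.mpr this
    exact (mul_eq_zero.mp htr0).resolve_right hU0
  -- conclude
  intro a
  have hb : ⁅(a : L), z⁆ ∈ A := by
    rw [← lie_skew]
    exact A.neg_mem (hA z (a : L) a.2)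
  have h1 : ⁅(a : L), ⁅z, w⁆⁆ = ⁅⁅(a : L), z⁆, w⁆ + ⁅z, ⁅(a : L), w⁆⁆ := by
    rw [lie_lie]; abel
  rw [h1, hw ⟨⁅(a : L), z⁆, hb⟩, hbrkt (a : L) a.2 hb, zero_smul, zero_add,
    hw ⟨(a : L), a.2⟩, lie_smul]

end WeightInvariance



/-- Lie's theorem: a nonzero finite-dimensional complex module over a solvable Lie
algebra has a common eigenvector. -/
theorem lie_theorem_aux (n : ℕ) (L : Type) [LieRing L] [LieAlgebra ℂ L]
    [FiniteDimensional ℂ L] [LieAlgebra.IsSolvable L] (hn : Module.finrank ℂ L ≤ n)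
    (V : Type) [AddCommGroup V] [Module ℂ V] [FiniteDimensional ℂ V]
    [LieRingModule L V] [LieModule ℂ L V] [Nontrivial V] :
    ∃ χ : L → ℂ, ∃ v : V, v ≠ 0 ∧ ∀ x : L, ⁅x, v⁆ = χ x • v := by
  induction n generalizing L with
  | zero =>
    have hsub : Subsingleton L := finrank_zero_iff.mp (Nat.le_zero.mp hn)
    obtain ⟨v, hv⟩ := exists_ne (0 : V)
    refine ⟨0, v, hv, fun x => ?_⟩
    have hx : x = 0 := Subsingleton.elim x 0
    rw [hx, zero_lie, Pi.zero_apply, zero_smul]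
  | succ n ih =>
    rcases Nat.lt_or_ge (Module.finrank ℂ L) (n + 1) with hlt | hge
    · exact ih L (Nat.lt_succ_iff.mp hlt)
    have hrank : Module.finrank ℂ L = n + 1 := le_antisymm hn hge
    have hLnt : Nontrivial L := Module.nontrivial_of_finrank_pos (R := ℂ) (by omega)
    -- the derived subalgebra is proper
    have hDlt := LieAlgebra.derivedSeries_lt_top_of_solvable ℂ L
    set DI : LieIdeal ℂ L := LieAlgebra.derivedSeries ℂ L 1 with hDI
    have hDne : (DI : Submodule ℂ L) ≠ ⊤ := by
      intro h
      refine hDlt.ne ?_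
      rw [eq_top_iff]
      intro x _
      show x ∈ (DI : Submodule ℂ L)
      rw [h]
      trivial
    -- a coatom (hyperplane) above it
    obtain ⟨A, hco, hDA⟩ : ∃ A : Submodule ℂ L, IsCoatom A ∧ (DI : Submodule ℂ L) ≤ A := by
      rcases eq_top_or_exists_le_coatom (DI : Submodule ℂ L) with h' | ⟨A, h1, h2⟩
      · exact absurd h' hDne
      · exact ⟨A, h1, h2⟩
    -- A absorbs all brackets
    have hA : ∀ (x : L), ∀ a ∈ A, ⁅x, a⁆ ∈ A := by
      intro x a _
      apply hDA
      have : ⁅x, a⁆ ∈ ⁅(⊤ : LieIdeal ℂ L), (⊤ : LieIdeal ℂ L)⁆ :=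
        LieSubmodule.lie_mem_lie (LieSubmodule.mem_top x) (LieSubmodule.mem_top a)
      simpa [hDI, LieAlgebra.derivedSeries_def] using this
    -- A as a Lie subalgebra
    set AL : LieSubalgebra ℂ L :=
      { A with lie_mem' := fun {x y} hx hy => hA x y hy } with hAL
    have hmemAL : ∀ x : L, x ∈ AL ↔ x ∈ A := fun x => Iff.rfl
    haveI : FiniteDimensional ℂ AL := inferInstanceAs (FiniteDimensional ℂ A)
    haveI : LieAlgebra.IsSolvable AL :=
      Function.Injective.lieAlgebra_isSolvable (f := AL.incl) Subtype.coe_injective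
    have hALrank : Module.finrank ℂ AL ≤ n := by
      have h1 : Module.finrank ℂ A < Module.finrank ℂ L :=
        Submodule.finrank_lt hco.1
      have h2 : Module.finrank ℂ AL = Module.finrank ℂ A := rfl
      omega
    -- apply induction
    obtain ⟨χ', w, hw0, hw⟩ := ih AL hALrank
    -- the simultaneous eigenspace
    set χA : A → ℂ := fun a => χ' ⟨(a : L), a.2⟩ with hχA
    set E : Submodule ℂ V :=
      ⨅ a : A, LinearMap.ker (LieModule.toEnd ℂ L V (a : L) - χA a • 1) with hE
    have hmemE : ∀ v : V, v ∈ E ↔ ∀ a : A, ⁅(a : L), v⁆ = χA a • v := by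
      intro v
      rw [hE, Submodule.mem_iInf]
      refine forall_congr' fun a => ?_
      rw [LinearMap.mem_ker, LinearMap.sub_apply, LinearMap.smul_apply, Module.End.one_apply,
        sub_eq_zero]
      rfl
    have hwE : w ∈ E := by
      rw [hmemE]
      intro a
      have := hw ⟨(a : L), a.2⟩
      rwa [LieSubalgebra.coe_bracket_of_module] at this
    -- E is L-invariant
    have hEinv : ∀ z : L, ∀ v ∈ E, ⁅z, v⁆ ∈ E := by
      intro z v hv
      rw [hmemE] at hv ⊢
      exact weight_space_invariant A hA χA v hv z
    -- eigenvector for the action of a complementary element z₀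
    obtain ⟨z₀, hz₀⟩ : ∃ z₀ : L, z₀ ∉ A := by
      by_contra h
      push_neg at h
      exact hco.1 (Submodule.eq_top_iff'.mpr h)
    have hT₀mem : ∀ v ∈ E, (LieModule.toEnd ℂ L V z₀) v ∈ E := fun v hv => hEinv z₀ v hv
    set T₀ : Module.End ℂ E := (LieModule.toEnd ℂ L V z₀).restrict hT₀mem with hT₀
    haveI : Nontrivial E := ⟨⟨w, hwE⟩, 0, by simp [hw0]⟩
    obtain ⟨μ, hμ⟩ := Module.End.exists_eigenvalue T₀
    obtain ⟨ev, hev⟩ := hμ.exists_hasEigenvector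
    set u : V := (ev : V) with hu
    have huE : u ∈ E := ev.2
    have hu0 : u ≠ 0 := fun h => hev.2 (ZeroMemClass.coe_eq_zero.mp h)
    have huz : ⁅z₀, u⁆ = μ • u := by
      have := congrArg (Subtype.val) hev.apply_eq_smul
      simpa [hT₀, LinearMap.restrict_coe_apply] using this
    have hua : ∀ a : A, ⁅(a : L), u⁆ = χA a • u := (hmemE u).mp huE
    -- decompose L = A ⊕ ℂ z₀
    have hsup : A ⊔ (ℂ ∙ z₀) = ⊤ := by
      apply hco.2
      refine lt_of_le_of_ne le_sup_left ?_
      intro h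
      apply hz₀
      rw [h]
      exact Submodule.mem_sup_right (Submodule.mem_span_singleton_self z₀)
    have hdecomp : ∀ x : L, ∃ (a : L) (c : ℂ), a ∈ A ∧ x = a + c • z₀ := by
      intro x
      have hx : x ∈ A ⊔ (ℂ ∙ z₀) := hsup ▸ Submodule.mem_top
      rcases Submodule.mem_sup.mp hx with ⟨a, ha, y, hy, rfl⟩
      rcases Submodule.mem_span_singleton.mp hy with ⟨c, rfl⟩
      exact ⟨a, c, ha, rfl⟩
    classical
    refine ⟨fun x => χA ⟨(hdecomp x).choose, (hdecomp x).choose_spec.choose_spec.1⟩ +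
      (hdecomp x).choose_spec.choose * μ, u, hu0, fun x => ?_⟩
    obtain ⟨ha, hxeq⟩ := (hdecomp x).choose_spec.choose_spec
    conv_lhs => rw [hxeq]
    rw [add_lie, smul_lie, huz, hua ⟨_, ha⟩, add_smul, smul_smul]



/-- If an invariant symmetric bilinear form on a nonzero module over a solvable complex Lie
algebra admits a nonzero isotropic vector, then it admits a nonzero isotropic common
eigenvector. -/
lemma exists_isotropic_eigenvector (L : Type) [LieRing L] [LieAlgebra ℂ L]
    [FiniteDimensional ℂ L] [LieAlgebra.IsSolvable L]
    (Q : Type) [AddCommGroup Q] [Module ℂ Q] [FiniteDimensional ℂ Q]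
    [LieRingModule L Q] [LieModule ℂ L Q]
    (g : Q →ₗ[ℂ] Q →ₗ[ℂ] ℂ) (hsymm : ∀ a b : Q, g a b = g b a)
    (hinv : ∀ (x : L) (a b : Q), g ⁅x, a⁆ b + g a ⁅x, b⁆ = 0)
    (q₀ : Q) (hq₀ : q₀ ≠ 0) (hq₀iso : g q₀ q₀ = 0) :
    ∃ v : Q, v ≠ 0 ∧ g v v = 0 ∧ ∃ χ : L → ℂ, ∀ x : L, ⁅x, v⁆ = χ x • v := by
  haveI : Nontrivial Q := ⟨q₀, 0, hq₀⟩
  obtain ⟨χ, v, hv0, hv⟩ := lie_theorem_aux (Module.finrank ℂ L) L le_rfl Q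
  by_cases hgvv : g v v = 0
  · exact ⟨v, hv0, hgvv, χ, hv⟩
  -- the eigenvalue must be zero
  have hχ0 : ∀ x : L, χ x = 0 := by
    intro x
    have h := hinv x v v
    rw [hv x, map_smul, LinearMap.smul_apply, map_smul] at h
    have h2 : (2 : ℂ) * (χ x * g v v) = 0 := by
      rw [two_mul]
      simpa [smul_eq_mul] using h
    rcases mul_eq_zero.mp h2 with h' | h'
    · norm_num at h'
    · exact (mul_eq_zero.mp h').resolve_right hgvv
  have hvinv : ∀ x : L, ⁅x, v⁆ = 0 := fun x => by rw [hv x, hχ0 x, zero_smul]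
  set Z : Submodule ℂ Q := LinearMap.ker (g v) with hZ
  by_cases hZbot : Z = ⊥
  · -- then g v q₀ must vanish, whence q₀ = 0, contradiction
    exfalso
    have hy : (g v q₀) • v - (g v v) • q₀ ∈ Z := by
      rw [hZ, LinearMap.mem_ker, map_sub, map_smul, map_smul]
      simp [smul_eq_mul, mul_comm]
    rw [hZbot, Submodule.mem_bot, sub_eq_zero] at hy
    have h2 := congrArg (fun t => g t q₀) hy
    simp only [map_smul, LinearMap.smul_apply, smul_eq_mul] at h2
    rw [hq₀iso, mul_zero] at h2
    have hgq : g v q₀ = 0 := by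
      have := mul_self_eq_zero.mp h2
      exact this
    have : q₀ ∈ Z := by rw [hZ, LinearMap.mem_ker]; exact hgq
    rw [hZbot, Submodule.mem_bot] at this
    exact hq₀ this
  · -- Z is a nonzero invariant submodule; find an eigenvector there
    have hZinv : ∀ (x : L), ∀ q ∈ Z, ⁅x, q⁆ ∈ Z := by
      intro x q hq
      rw [hZ, LinearMap.mem_ker]
      have h := hinv x v q
      rw [hvinv x, map_zero, LinearMap.zero_apply, zero_add] at h
      exact h
    set ZL : LieSubmodule ℂ L Q := { Z with lie_mem := fun {x m} hm => hZinv x m hm } with hZL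
    haveI : FiniteDimensional ℂ ZL := inferInstanceAs (FiniteDimensional ℂ Z)
    haveI : Nontrivial ZL := by
      obtain ⟨b, hb, hb0⟩ := Submodule.exists_mem_ne_zero_of_ne_bot hZbot
      exact ⟨⟨b, hb⟩, 0, fun h => hb0 (by simpa using congrArg Subtype.val h)⟩
    obtain ⟨χ₂, u', hu'0, hu'⟩ := lie_theorem_aux (Module.finrank ℂ L) L le_rfl ZL
    set u : Q := (u' : Q) with hu
    have hu0 : u ≠ 0 := fun h => hu'0 (ZeroMemClass.coe_eq_zero.mp h)
    have huZ : u ∈ Z := u'.2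
    have hueig : ∀ x : L, ⁅x, u⁆ = χ₂ x • u := by
      intro x
      have := congrArg (Subtype.val) (hu' x)
      rw [LieSubmodule.coe_bracket] at this
      simpa using this
    by_cases hguu : g u u = 0
    · exact ⟨u, hu0, hguu, χ₂, hueig⟩
    -- both v and u are invariant anisotropic vectors; combine them
    have hχ₂0 : ∀ x : L, χ₂ x = 0 := by
      intro x
      have h := hinv x u u
      rw [hueig x, map_smul, LinearMap.smul_apply, map_smul] at h
      have h2 : (2 : ℂ) * (χ₂ x * g u u) = 0 := by
        rw [two_mul]
        simpa [smul_eq_mul] using h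
      rcases mul_eq_zero.mp h2 with h' | h'
      · norm_num at h'
      · exact (mul_eq_zero.mp h').resolve_right hguu
    have huinv : ∀ x : L, ⁅x, u⁆ = 0 := fun x => by rw [hueig x, hχ₂0 x, zero_smul]
    have hgvu : g v u = 0 := huZ
    have hguv : g u v = 0 := by rw [hsymm]; exact hgvu
    obtain ⟨c, hc⟩ := IsAlgClosed.exists_pow_nat_eq (k := ℂ) (-(g u u) / g v v) (n := 2)
      (by norm_num)
    have hc2 : c ^ 2 * g v v = -(g u u) := by
      rw [hc, div_mul_cancel₀ _ hgvv]
    refine ⟨c • v + u, ?_, ?_, 0, fun x => ?_⟩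
    · intro h
      have hueq : u = -(c • v) := by linear_combination (norm := module) h
      have hguu2 : g u u = c ^ 2 * g v v := by
        rw [hueq]
        simp only [map_neg, map_smul, LinearMap.neg_apply, LinearMap.smul_apply, smul_eq_mul]
        ring
      have h2 : (2 : ℂ) * g u u = 0 := by linear_combination hguu2 + hc2
      rcases mul_eq_zero.mp h2 with h' | h'
      · norm_num at h'
      · exact hguu h'
    · simp only [map_add, map_smul, LinearMap.add_apply, LinearMap.smul_apply, smul_eq_mul,
        hgvu, hguv]
      linear_combination hc2
    · rw [lie_add, lie_smul, hvinv x, huinv x, smul_zero, add_zero, Pi.zero_apply, zero_smul]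



/-- Let `𝔤` be a finite-dimensional solvable Lie algebra over `ℂ`,
`W` a finite-dimensional `𝔤`-module, `f` a `𝔤`-invariant symmetric bilinear form on
`W`, and `V ⊆ W` an isotropic `𝔤`-submodule.  Then there is a `𝔤`-submodule
`V' ⊇ V` of `W` which is isotropic and maximal among all isotropic subspaces of
`W`. -/
theorem exists_invariant_maximal_isotropic
    (L : Type) [LieRing L] [LieAlgebra ℂ L] [FiniteDimensional ℂ L]
    [LieAlgebra.IsSolvable L]
    (W : Type) [AddCommGroup W] [Module ℂ W] [FiniteDimensional ℂ W]
    [LieRingModule L W] [LieModule ℂ L W]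
    (f : W →ₗ[ℂ] W →ₗ[ℂ] ℂ)
    (hf_symm : ∀ w w' : W, f w w' = f w' w)
    (hf_inv : ∀ (x : L) (w w' : W), f ⁅x, w⁆ w' + f w ⁅x, w'⁆ = 0)
    (V : Submodule ℂ W)
    (hV : ∀ (x : L), ∀ w ∈ V, ⁅x, w⁆ ∈ V)
    (hViso : ∀ w ∈ V, ∀ w' ∈ V, f w w' = 0) :
    ∃ V' : Submodule ℂ W,
      (∀ (x : L), ∀ w ∈ V', ⁅x, w⁆ ∈ V') ∧
      V ≤ V' ∧
      (∀ w ∈ V', ∀ w' ∈ V', f w w' = 0) ∧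
      (∀ U : Submodule ℂ W, (∀ w ∈ U, ∀ w' ∈ U, f w w' = 0) → V' ≤ U → U = V') := by
  classical
  set S : Set (Submodule ℂ W) :=
    {U | (∀ x : L, ∀ w ∈ U, ⁅x, w⁆ ∈ U) ∧ V ≤ U ∧ (∀ w ∈ U, ∀ w' ∈ U, f w w' = 0)} with hS
  have hVS : V ∈ S := ⟨hV, le_rfl, hViso⟩
  -- choose an element of S of maximal dimension
  obtain ⟨V', hV'S, hmax⟩ : ∃ V' ∈ S, ∀ U ∈ S, finrank ℂ U ≤ finrank ℂ V' := by
    have hne : ((fun U : Submodule ℂ W => finrank ℂ U) '' S).Nonempty := ⟨_, V, hVS, rfl⟩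
    have hbdd : BddAbove ((fun U : Submodule ℂ W => finrank ℂ U) '' S) :=
      ⟨finrank ℂ W, by rintro _ ⟨U, _, rfl⟩; exact Submodule.finrank_le U⟩
    obtain ⟨V', hV'S, hV'eq⟩ := Nat.sSup_mem hne hbdd
    refine ⟨V', hV'S, fun U hU => ?_⟩
    have : finrank ℂ U ≤ sSup ((fun U : Submodule ℂ W => finrank ℂ U) '' S) :=
      le_csSup hbdd ⟨U, hU, rfl⟩
    simpa [hV'eq] using this
  obtain ⟨hV'inv, hVV', hV'iso⟩ := hV'S
  refine ⟨V', hV'inv, hVV', hV'iso, ?_⟩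
  intro U hUiso hle
  by_contra hne
  obtain ⟨u₀, hu₀U, hu₀V'⟩ := SetLike.exists_of_lt (lt_of_le_of_ne hle (Ne.symm hne))
  -- the orthogonal complement of V'
  set P : Submodule ℂ W := ⨅ v : V', LinearMap.ker (f (v : W)) with hP
  have hmemP : ∀ w : W, w ∈ P ↔ ∀ v ∈ V', f v w = 0 := by
    intro w
    rw [hP, Submodule.mem_iInf]
    constructor
    · intro h v hv; exact h ⟨v, hv⟩
    · intro h v; exact h v v.2
  have hV'P : V' ≤ P := fun v hv => (hmemP v).mpr fun v' hv' => hV'iso v' hv' v hv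
  have hu₀P : u₀ ∈ P := (hmemP u₀).mpr fun v hv => hUiso v (hle hv) u₀ hu₀U
  have hPinv : ∀ (x : L), ∀ w ∈ P, ⁅x, w⁆ ∈ P := by
    intro x w hw
    rw [hmemP]
    intro v hv
    have h := hf_inv x v w
    have h2 : f ⁅x, v⁆ w = 0 := (hmemP w).mp hw _ (hV'inv x v hv)
    rw [h2, zero_add] at h
    exact h
  -- Lie submodule structures
  set V'W : LieSubmodule ℂ L W := { V' with lie_mem := fun {x m} hm => hV'inv x m hm } with hV'W
  set PL : LieSubmodule ℂ L W := { P with lie_mem := fun {x m} hm => hPinv x m hm } with hPL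
  haveI : FiniteDimensional ℂ PL := inferInstanceAs (FiniteDimensional ℂ P)
  set NP : LieSubmodule ℂ L PL := LieSubmodule.comap PL.incl V'W with hNP
  have hmemNP : ∀ p : PL, p ∈ NP ↔ (p : W) ∈ V' := fun p => Iff.rfl
  -- the quotient module
  set Q := PL ⧸ NP with hQ
  haveI : FiniteDimensional ℂ Q := inferInstanceAs (FiniteDimensional ℂ (PL ⧸ NP.toSubmodule))
  -- the induced bilinear form
  set Sb : (PL : Type) →ₗ[ℂ] W := (PL : Submodule ℂ W).subtype with hSb
  set g₀ : (PL : Type) →ₗ[ℂ] (PL : Type) →ₗ[ℂ] ℂ := f.compl₁₂ Sb Sb with hg₀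
  have h₁ : NP.toSubmodule ≤ LinearMap.ker g₀ := by
    intro n hn
    rw [LinearMap.mem_ker]
    ext p
    have hnV' : (n : W) ∈ V' := hn
    have : f (n : W) (p : W) = 0 := (hmemP (p : W)).mp p.2 (n : W) hnV'
    exact this
  set g₁ : Q →ₗ[ℂ] (PL : Type) →ₗ[ℂ] ℂ := Submodule.liftQ NP.toSubmodule g₀ h₁ with hg₁
  have h₂ : NP.toSubmodule ≤ LinearMap.ker g₁.flip := by
    intro n hn
    rw [LinearMap.mem_ker]
    ext q
    obtain ⟨p, rfl⟩ := Submodule.Quotient.mk_surjective _ q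
    have hnV' : (n : W) ∈ V' := hn
    have : f (p : W) (n : W) = 0 := by
      rw [hf_symm]
      exact (hmemP (p : W)).mp p.2 _ hnV'
    exact this
  set g : Q →ₗ[ℂ] Q →ₗ[ℂ] ℂ := Submodule.liftQ NP.toSubmodule g₁.flip h₂ with hg
  have hgapp : ∀ p p' : PL, g (Submodule.Quotient.mk p) (Submodule.Quotient.mk p') =
      f (p : W) (p' : W) := by
    intro p p'
    have h0 : g (Submodule.Quotient.mk p) (Submodule.Quotient.mk p') = f (Sb p') (Sb p) := rfl
    rw [h0]
    exact hf_symm _ _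
  have hmkbr : ∀ (x : L) (p : PL),
      (⁅x, Submodule.Quotient.mk p⁆ : Q) = Submodule.Quotient.mk ⁅x, p⁆ := by
    intro x p
    exact ((LieSubmodule.Quotient.mk' NP).map_lie x p).symm
  have hgsymm : ∀ a b : Q, g a b = g b a := by
    intro a b
    obtain ⟨p, rfl⟩ := Submodule.Quotient.mk_surjective _ a
    obtain ⟨p', rfl⟩ := Submodule.Quotient.mk_surjective _ b
    rw [hgapp, hgapp, hf_symm]
  have hginv : ∀ (x : L) (a b : Q), g ⁅x, a⁆ b + g a ⁅x, b⁆ = 0 := by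
    intro x a b
    obtain ⟨p, rfl⟩ := Submodule.Quotient.mk_surjective _ a
    obtain ⟨p', rfl⟩ := Submodule.Quotient.mk_surjective _ b
    rw [hmkbr, hmkbr, hgapp, hgapp]
    have h1 : ((⁅x, p⁆ : PL) : W) = ⁅x, (p : W)⁆ := rfl
    have h2 : ((⁅x, p'⁆ : PL) : W) = ⁅x, (p' : W)⁆ := rfl
    rw [h1, h2]
    exact hf_inv x (p : W) (p' : W)
  -- the isotropic vector coming from U
  set q₀ : Q := Submodule.Quotient.mk ⟨u₀, hu₀P⟩ with hq₀
  have hq₀ne : q₀ ≠ 0 := by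
    rw [hq₀]
    intro h
    rw [Submodule.Quotient.mk_eq_zero] at h
    exact hu₀V' h
  have hq₀iso : g q₀ q₀ = 0 := by
    rw [hq₀, hgapp]
    exact hUiso u₀ hu₀U u₀ hu₀U
  -- find an isotropic common eigenvector in the quotient
  obtain ⟨vq, hvq0, hvqiso, χ, hχ⟩ :=
    exists_isotropic_eigenvector L Q g hgsymm hginv q₀ hq₀ne hq₀iso
  obtain ⟨p, rfl⟩ := Submodule.Quotient.mk_surjective _ vq
  set u : W := (p : W) with hu
  have huP : u ∈ P := p.2
  have hunotV' : u ∉ V' := by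
    intro h
    apply hvq0
    rw [Submodule.Quotient.mk_eq_zero]
    exact h
  have huiso : f u u = 0 := by rw [← hgapp p p]; exact hvqiso
  have heig : ∀ x : L, ⁅x, u⁆ - χ x • u ∈ V' := by
    intro x
    have h := hχ x
    rw [hmkbr] at h
    have h2 : (Submodule.Quotient.mk (⁅x, p⁆ - χ x • p) : Q) = 0 := by
      rw [Submodule.Quotient.mk_sub, Submodule.Quotient.mk_smul, h, sub_self]
    rw [Submodule.Quotient.mk_eq_zero] at h2
    have h3 : ((⁅x, p⁆ - χ x • p : PL) : W) ∈ V' := h2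
    simpa using h3
  have hfV'u : ∀ v ∈ V', f v u = 0 := fun v hv => (hmemP u).mp huP v hv
  have hfuV' : ∀ v ∈ V', f u v = 0 := fun v hv => by rw [hf_symm]; exact hfV'u v hv
  -- build the enlargement
  set V'' : Submodule ℂ W := V' ⊔ (ℂ ∙ u) with hV''
  have huV'' : u ∈ V'' := Submodule.mem_sup_right (Submodule.mem_span_singleton_self u)
  have hV''S : V'' ∈ S := by
    refine ⟨?_, le_trans hVV' le_sup_left, ?_⟩
    · intro x w hw
      rcases Submodule.mem_sup.mp hw with ⟨a, ha, y, hy, rfl⟩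
      rcases Submodule.mem_span_singleton.mp hy with ⟨c, rfl⟩
      rw [lie_add, lie_smul]
      refine add_mem (Submodule.mem_sup_left (hV'inv x a ha)) (Submodule.smul_mem _ _ ?_)
      have hdecomp : ⁅x, u⁆ = (⁅x, u⁆ - χ x • u) + χ x • u := by abel
      rw [hdecomp]
      exact add_mem (Submodule.mem_sup_left (heig x))
        (Submodule.mem_sup_right (Submodule.smul_mem _ _ (Submodule.mem_span_singleton_self u)))
    · intro w hw w' hw'
      rcases Submodule.mem_sup.mp hw with ⟨a, ha, y, hy, rfl⟩
      rcases Submodule.mem_span_singleton.mp hy with ⟨c, rfl⟩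
      rcases Submodule.mem_sup.mp hw' with ⟨a', ha', y', hy', rfl⟩
      rcases Submodule.mem_span_singleton.mp hy' with ⟨c', rfl⟩
      simp only [map_add, map_smul, LinearMap.add_apply, LinearMap.smul_apply, smul_eq_mul]
      rw [hV'iso a ha a' ha', hfV'u a ha, hfuV' a' ha', huiso]
      ring
  -- contradiction with maximality
  have hlt : V' < V'' := lt_of_le_of_ne le_sup_left (fun h => hunotV' (h ▸ huV''))
  have := Submodule.finrank_lt_finrank_of_lt hlt
  have := hmax V'' hV''S
  omega
end

section
/- Let 𝔤 = 𝔤₀ ⊕ 𝔤₁ be a Lie superalgebra over ℂ encoded in components, with 𝔤₀ solvable, and let λ : 𝔤₀ → ℂ be a linear functional with λ(⁅𝔤₀,𝔤₀⁆) = 0. Then there exists a polarization for λ, i.e. a 𝔤₀-submodule 𝔭 ⊆ 𝔤₁ with f_λ(𝔭,𝔭) = 0 that is maximal among all subspaces U ⊆ 𝔤₁ with f_λ(U,U) = 0. -/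
open Module LinearMap


lemma key_chi_bracket_eq_zero
    (L : Type) [LieRing L] [LieAlgebra ℂ L]
    (M : Type) [AddCommGroup M] [Module ℂ M] [FiniteDimensional ℂ M]
    [LieRingModule L M] [LieModule ℂ L M]
    (x : L) (S : Set L) (hS : ∀ a ∈ S, ⁅a, x⁆ ∈ S)
    (χ : L → ℂ) (m : M) (hm : m ≠ 0)
    (hme : ∀ a ∈ S, ⁅a, m⁆ = χ a • m) :
    ∀ a ∈ S, χ ⁅a, x⁆ = 0 := by
  intro a haS
  set ρ := LieModule.toEnd ℂ L M with hρ
  set X : Module.End ℂ M := ρ x with hX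
  have hρapply : ∀ (b : L) (u : M), ρ b u = ⁅b, u⁆ := fun b u => rfl
  have hcomm : ∀ (b : L) (u : M), ρ ⁅b, x⁆ u = ρ b (X u) - X (ρ b u) := by
    intro b u
    have h1 : ρ ⁅b, x⁆ = ρ b * X - X * ρ b := by
      ext u; exact lie_lie b x u
    rw [h1]
    simp [LinearMap.sub_apply, Module.End.mul_apply]
  have hpow : ∀ k : ℕ, (X ^ (k + 1)) m = X ((X ^ k) m) := by
    intro k; rw [pow_succ', Module.End.mul_apply]
  -- the filtration
  set U : ℕ → Submodule ℂ M := fun k =>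
    Submodule.span ℂ ((fun i => (X ^ i) m) '' Set.Iio k) with hU
  have hUmono : Monotone U := by
    intro i j hij
    exact Submodule.span_mono (Set.image_mono (fun t ht => lt_of_lt_of_le ht hij))
  have hXk_mem : ∀ k, (X ^ k) m ∈ U (k + 1) :=
    fun k => Submodule.subset_span ⟨k, Nat.lt_succ_self k, rfl⟩
  have hXU : ∀ k, ∀ u ∈ U k, X u ∈ U (k + 1) := by
    intro k u hu
    induction hu using Submodule.span_induction with
    | mem y hy =>
      obtain ⟨i, hi, rfl⟩ := hy
      rw [← hpow i]
      exact Submodule.subset_span ⟨i + 1, Nat.succ_lt_succ hi, rfl⟩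
    | zero => simp
    | add y z _ _ hy hz => rw [map_add]; exact Submodule.add_mem _ hy hz
    | smul c y _ hy => rw [map_smul]; exact Submodule.smul_mem _ c hy
  -- key claim
  have claimC : ∀ k, ∀ b ∈ S, ρ b ((X ^ k) m) - χ b • (X ^ k) m ∈ U k := by
    intro k
    induction k with
    | zero =>
      intro b hb
      simp only [pow_zero, Module.End.one_apply]
      rw [hρapply, hme b hb, sub_self]
      exact Submodule.zero_mem _
    | succ k ih =>
      intro b hb
      have hw := ih b hb
      have hw' := ih ⁅b, x⁆ (hS b hb)
      have expand : ρ b ((X ^ (k+1)) m) - χ b • (X ^ (k+1)) m =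
          X (ρ b ((X ^ k) m) - χ b • (X ^ k) m)
          + (ρ ⁅b, x⁆ ((X ^ k) m) - χ ⁅b, x⁆ • (X ^ k) m)
          + χ ⁅b, x⁆ • (X ^ k) m := by
        rw [hpow k, map_sub, map_smul]
        have := hcomm b ((X ^ k) m)
        rw [eq_sub_iff_add_eq] at this
        rw [← hpow k]
        rw [hpow k, ← this]
        abel
      rw [expand]
      refine Submodule.add_mem _ (Submodule.add_mem _ ?_ ?_) ?_
      · exact hXU k _ hw
      · exact hUmono (Nat.le_succ k) hw'
      · exact Submodule.smul_mem _ _ (hXk_mem k)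
  -- stabilization
  obtain ⟨n₀, hn₀⟩ := monotone_stabilizes_iff_noetherian.2
    (inferInstance : IsNoetherian ℂ M) ⟨U, hUmono⟩
  have hstab : U (n₀ + 1) = U (n₀ + 2) :=
    ((hn₀ (n₀ + 1) (by omega)).symm.trans (hn₀ (n₀ + 2) (by omega)) :
      U (n₀ + 1) = U (n₀ + 2))
  set n : ℕ := n₀ + 1 with hn
  have hmW : m ∈ U n := by
    have h0 : (X ^ 0) m ∈ U 1 := hXk_mem 0
    simp only [pow_zero, Module.End.one_apply] at h0
    exact hUmono (by omega : 1 ≤ n) h0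
  have hXW : ∀ u ∈ U n, X u ∈ U n := by
    intro u hu
    have := hXU n u hu
    rwa [← hstab] at this
  have hρW : ∀ b ∈ S, ∀ u ∈ U n, ρ b u ∈ U n := by
    intro b hb u hu
    induction hu using Submodule.span_induction with
    | mem y hy =>
      obtain ⟨i, hi, rfl⟩ := hy
      have h1 := claimC i b hb
      have h3 : ρ b ((X ^ i) m) =
          (ρ b ((X ^ i) m) - χ b • (X ^ i) m) + χ b • (X ^ i) m := by abel
      rw [h3]
      exact Submodule.add_mem _ (hUmono (le_of_lt hi) h1)
        (Submodule.smul_mem _ _ (hUmono hi (hXk_mem i)))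
    | zero => simp
    | add y z _ _ hy hz => rw [map_add]; exact Submodule.add_mem _ hy hz
    | smul c y _ hy => rw [map_smul]; exact Submodule.smul_mem _ c hy
  -- nilpotent part
  set c : L := ⁅a, x⁆ with hc
  have hcS : c ∈ S := hS a haS
  set D : Module.End ℂ M := ρ c - χ c • 1 with hD
  have hDapply : ∀ u : M, D u = ρ c u - χ c • u := by
    intro u; simp [hD, LinearMap.sub_apply, LinearMap.smul_apply]
  have hDdown : ∀ k, ∀ u ∈ U (k + 1), D u ∈ U k := by
    intro k u hu
    induction hu using Submodule.span_induction with
    | mem y hy =>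
      obtain ⟨i, hi, rfl⟩ := hy
      rw [hDapply]
      exact hUmono (Nat.lt_succ_iff.mp hi) (claimC i c hcS)
    | zero => simp
    | add y z _ _ hy hz => rw [map_add]; exact Submodule.add_mem _ hy hz
    | smul t y _ hy => rw [map_smul]; exact Submodule.smul_mem _ t hy
  have hDzero : ∀ k, ∀ u ∈ U k, (D ^ k) u = 0 := by
    intro k
    induction k with
    | zero =>
      intro u hu
      have h0 : u = 0 := by
        have : U 0 = ⊥ := by
          simp [hU, Set.Iio, Nat.not_lt_zero]
        rw [this] at hu; simpa using hu
      simp [h0]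
    | succ k ih =>
      intro u hu
      rw [pow_succ, Module.End.mul_apply]
      exact ih _ (hDdown k u hu)
  have hDW : ∀ u ∈ U n, D u ∈ U n :=
    fun u hu => hUmono (by omega : n₀ ≤ n) (hDdown n₀ u hu)
  have hρaW : ∀ u ∈ U n, ρ a u ∈ U n := hρW a haS
  have hρcW : ∀ u ∈ U n, ρ c u ∈ U n := hρW c hcS
  set Ar := (ρ a).restrict hρaW with hAr
  set Xr := X.restrict hXW with hXr
  set Cr := (ρ c).restrict hρcW with hCr
  set Dr := D.restrict hDW with hDr
  have hCcomm : Cr = Ar * Xr - Xr * Ar := by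
    ext u
    have := hcomm a (u : M)
    simp only [hCr, hAr, hXr, LinearMap.sub_apply, Module.End.mul_apply,
      LinearMap.restrict_coe_apply, AddSubgroupClass.coe_sub]
    exact this
  have htr0 : LinearMap.trace ℂ (U n) Cr = 0 := by
    rw [hCcomm, map_sub, LinearMap.trace_mul_comm, sub_self]
  have hCD : Cr = χ c • 1 + Dr := by
    ext u
    have h1 := hDapply (u : M)
    simp only [hCr, hDr, LinearMap.add_apply, LinearMap.smul_apply, Module.End.one_apply,
      LinearMap.restrict_coe_apply, Submodule.coe_add, SetLike.val_smul]
    rw [h1]; abel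
  have hDrnil : Dr ^ n = 0 := by
    ext u
    rw [hDr, Module.End.pow_restrict, LinearMap.restrict_coe_apply]
    simpa using hDzero n (u : M) u.2
  have htrval : LinearMap.trace ℂ (U n) Cr = χ c * (finrank ℂ (U n) : ℂ) := by
    rw [hCD, map_add, map_smul, LinearMap.trace_one,
      (LinearMap.isNilpotent_trace_of_isNilpotent ⟨n, hDrnil⟩).eq_zero]
    simp [smul_eq_mul]
  have hpos : 0 < finrank ℂ (U n) := by
    have : Nontrivial (U n) := ⟨⟨⟨m, hmW⟩, 0, by simp [Subtype.ext_iff, hm]⟩⟩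
    exact Module.finrank_pos
  have : χ c * (finrank ℂ (U n) : ℂ) = 0 := by rw [← htrval, htr0]
  have hne : ((finrank ℂ (U n) : ℂ)) ≠ 0 :=
    Nat.cast_ne_zero.mpr (by omega)
  exact (mul_eq_zero.mp this).resolve_right hne



lemma lie_thm_aux : ∀ (n : ℕ) (L : Type) [LieRing L] [LieAlgebra ℂ L]
    [FiniteDimensional ℂ L] [LieAlgebra.IsSolvable L],
    finrank ℂ L ≤ n →
    ∀ (M : Type) [AddCommGroup M] [Module ℂ M] [FiniteDimensional ℂ M]
      [LieRingModule L M] [LieModule ℂ L M] [Nontrivial M],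
    ∃ v : M, v ≠ 0 ∧ ∀ x : L, ∃ c : ℂ, ⁅x, v⁆ = c • v := by
  intro n
  induction n using Nat.strong_induction_on with
  | _ n IH =>
    intro L _ _ _ _ hdim M _ _ _ _ _ _
    rcases subsingleton_or_nontrivial L with hL | hL
    · obtain ⟨v, hv⟩ := exists_ne (0 : M)
      refine ⟨v, hv, fun x => ⟨0, ?_⟩⟩
      rw [Subsingleton.elim x 0, zero_lie, zero_smul]
    · -- derived algebra is proper
      have hD : LieAlgebra.derivedSeries ℂ L 1 < ⊤ :=
        LieAlgebra.derivedSeries_lt_top_of_solvable ℂ L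
      set Dsub : Submodule ℂ L := (LieAlgebra.derivedSeries ℂ L 1).toSubmodule with hDsub
      have hbr : ∀ x y : L, ⁅x, y⁆ ∈ Dsub := by
        intro x y
        show ⁅x, y⁆ ∈ LieAlgebra.derivedSeries ℂ L 1
        rw [LieAlgebra.derivedSeries_def, LieAlgebra.derivedSeriesOfIdeal_succ,
          LieAlgebra.derivedSeriesOfIdeal_zero]
        exact LieSubmodule.lie_mem_lie (LieSubmodule.mem_top _) (LieSubmodule.mem_top _)
      obtain ⟨z, hz⟩ : ∃ z : L, z ∉ Dsub := by
        by_contra hcon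
        push_neg at hcon
        exact (lt_irrefl _ (by
          have : (⊤ : LieIdeal ℂ L) ≤ LieAlgebra.derivedSeries ℂ L 1 :=
            fun y _ => hcon y
          exact lt_of_lt_of_le hD this))
      obtain ⟨φ, hφz, hφD⟩ := Submodule.exists_dual_map_eq_bot_of_notMem hz inferInstance
      have hφD' : ∀ y ∈ Dsub, φ y = 0 := by
        intro y hy
        have : φ y ∈ Dsub.map φ := Submodule.mem_map_of_mem hy
        rwa [hφD, Submodule.mem_bot] at this
      -- the codimension-one ideal
      set A : Submodule ℂ L := LinearMap.ker φ with hA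
      have hDA : Dsub ≤ A := fun y hy => hφD' y hy
      have hzA : z ∉ A := by simpa [hA, LinearMap.mem_ker] using hφz
      have hbrA : ∀ x y : L, ⁅x, y⁆ ∈ A := fun x y => hDA (hbr x y)
      set A' : LieIdeal ℂ L :=
        { A with lie_mem := fun {x} {m} _ => hbrA x m } with hA'
      have hA'sub : (A' : Submodule ℂ L) = A := rfl
      haveI : LieAlgebra.IsSolvable A' := A'.incl_injective.lieAlgebra_isSolvable
      have hAlt : finrank ℂ A' < n := by
        have h1 : finrank ℂ A < finrank ℂ L :=
          Submodule.finrank_lt (fun h => hzA (h ▸ trivial))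
        exact lt_of_lt_of_le h1 hdim
      obtain ⟨v₀, hv₀ne, hv₀⟩ := IH (finrank ℂ A') hAlt A' (le_refl _) M
      have hv₀' : ∀ y ∈ A, ∃ c : ℂ, ⁅y, v₀⁆ = c • v₀ := by
        intro y hy
        obtain ⟨c, hc⟩ := hv₀ ⟨y, hy⟩
        exact ⟨c, by rwa [LieIdeal.coe_bracket_of_module] at hc⟩
      choose! χ hχ using hv₀'
      -- the common eigenspace W for A with weight χ
      set W : Submodule ℂ M := {
        carrier := {m : M | ∀ y ∈ A, ⁅y, m⁆ = χ y • m}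
        add_mem' := by
          intro p q hp hq y hy
          rw [lie_add, hp y hy, hq y hy, smul_add]
        zero_mem' := by intro y hy; rw [lie_zero, smul_zero]
        smul_mem' := by
          intro t p hp y hy
          rw [lie_smul, hp y hy, smul_comm] } with hW
      have hv₀W : v₀ ∈ W := hχ
      have hkey : ∀ x : L, ∀ y ∈ A, χ ⁅y, x⁆ = 0 := by
        intro x
        exact key_chi_bracket_eq_zero L M x (A : Set L)
          (fun a _ => hbrA a x) χ v₀ hv₀ne hχ
      have hWinv : ∀ (x : L), ∀ m ∈ W, ⁅x, m⁆ ∈ W := by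
        intro x m hm y hy
        have h1 : ⁅⁅y, x⁆, m⁆ = ⁅y, ⁅x, m⁆⁆ - ⁅x, ⁅y, m⁆⁆ := lie_lie y x m
        have h2 : ⁅⁅y, x⁆, m⁆ = χ ⁅y, x⁆ • m := hm ⁅y, x⁆ (hbrA y x)
        rw [hkey x y hy, zero_smul] at h2
        have h3 : ⁅y, ⁅x, m⁆⁆ = ⁅x, ⁅y, m⁆⁆ := by
          rw [h2] at h1; exact sub_eq_zero.mp h1.symm
        rw [h3, hm y hy, lie_smul]
      -- eigenvector for z inside W
      haveI : Nontrivial W := ⟨⟨⟨v₀, hv₀W⟩, 0, by simp [Subtype.ext_iff, hv₀ne]⟩⟩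
      set E : Module.End ℂ W :=
        (LieModule.toEnd ℂ L M z).restrict
          (p := W) (q := W) (fun m hm => hWinv z m hm) with hE
      obtain ⟨c, hc⟩ := Module.End.exists_eigenvalue E
      obtain ⟨w, hw⟩ := hc.exists_hasEigenvector
      have hwne : (w : M) ≠ 0 := fun h => hw.2 (Subtype.ext h)
      have hzw : ⁅z, (w : M)⁆ = c • (w : M) := by
        have := hw.apply_eq_smul
        have h2 : (E w : M) = c • (w : M) := by rw [this]; rfl
        exact h2
      refine ⟨(w : M), hwne, fun x => ?_⟩
      -- decompose x = a + (φ x / φ z) • z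
      have hxa : x - (φ x / φ z) • z ∈ A := by
        rw [hA, LinearMap.mem_ker, map_sub, map_smul, smul_eq_mul]
        field_simp; ring
      have hwW : (w : M) ∈ W := w.2
      refine ⟨χ (x - (φ x / φ z) • z) + (φ x / φ z) * c, ?_⟩
      have hxdec : x = (x - (φ x / φ z) • z) + (φ x / φ z) • z := by abel
      calc ⁅x, (w : M)⁆
          = ⁅x - (φ x / φ z) • z, (w : M)⁆ + (φ x / φ z) • ⁅z, (w : M)⁆ := by
            rw [← smul_lie, ← add_lie, ← hxdec]
        _ = χ (x - (φ x / φ z) • z) • (w : M) + (φ x / φ z) • (c • (w : M)) := by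
            rw [hwW _ hxa, hzw]
        _ = (χ (x - (φ x / φ z) • z) + (φ x / φ z) * c) • (w : M) := by
            rw [smul_smul, add_smul]



lemma exists_isotropic_combination (M : Type) [AddCommGroup M] [Module ℂ M]
    (f : M →ₗ[ℂ] M →ₗ[ℂ] ℂ) (hsymm : ∀ a b : M, f a b = f b a) (a b : M)
    (hb : f b b ≠ 0) :
    ∃ t : ℂ, f (a + t • b) (a + t • b) = 0 := by
  obtain ⟨s, hs⟩ := IsAlgClosed.exists_pow_nat_eq ((f a b) ^ 2 - f a a * f b b) (zero_lt_two)
  refine ⟨(s - f a b) / f b b, ?_⟩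
  simp only [map_add, map_smul, LinearMap.add_apply, LinearMap.smul_apply, smul_eq_mul]
  rw [hsymm b a]
  field_simp
  linear_combination hs

lemma isotropic_line_aux (L : Type) [LieRing L] [LieAlgebra ℂ L]
    [FiniteDimensional ℂ L] [LieAlgebra.IsSolvable L] :
    ∀ (n : ℕ) (M : Type) [AddCommGroup M] [Module ℂ M] [FiniteDimensional ℂ M]
      [LieRingModule L M] [LieModule ℂ L M],
    finrank ℂ M ≤ n →
    ∀ (f : M →ₗ[ℂ] M →ₗ[ℂ] ℂ), (∀ a c : M, f a c = f c a) →
    (∀ (x : L) (a c : M), f ⁅x, a⁆ c + f a ⁅x, c⁆ = 0) →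
    ∀ q : M, q ≠ 0 → f q q = 0 →
    ∃ v : M, v ≠ 0 ∧ f v v = 0 ∧ ∀ x : L, ∃ c : ℂ, ⁅x, v⁆ = c • v := by
  intro n
  induction n using Nat.strong_induction_on with
  | _ n IH =>
    intro M _ _ _ _ _ hdim f hsymm hinv q hq hq0
    haveI : Nontrivial M := nontrivial_of_ne q 0 hq
    obtain ⟨v, hvne, heig⟩ := lie_thm_aux (finrank ℂ L) L (le_refl _) M
    by_cases hfvv : f v v = 0
    · exact ⟨v, hvne, hfvv, heig⟩
    -- the weight is zero
    have heig0 : ∀ x : L, ⁅x, v⁆ = 0 := by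
      intro x
      obtain ⟨c, hc⟩ := heig x
      have h1 := hinv x v v
      rw [hc] at h1
      simp only [map_smul, LinearMap.smul_apply, smul_eq_mul] at h1
      have hc0 : c = 0 := by
        have h2 : c * f v v = 0 := by linear_combination h1 / 2
        rcases mul_eq_zero.mp h2 with h3 | h3
        · exact h3
        · exact absurd h3 hfvv
      rw [hc, hc0, zero_smul]
    -- the perp of v
    set W : Submodule ℂ M := LinearMap.ker (f v) with hWdef
    have hmemW : ∀ a : M, a ∈ W ↔ f v a = 0 := fun a => Iff.rfl
    have hvW : v ∉ W := by simpa [hmemW] using hfvv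
    have hWlie : ∀ (x : L), ∀ a ∈ W, ⁅x, a⁆ ∈ W := by
      intro x a ha
      rw [hmemW]
      have h1 := hinv x v a
      rw [heig0 x, map_zero, LinearMap.zero_apply, zero_add] at h1
      exact h1
    -- decompose q
    set cq : ℂ := f q v / f v v with hcq
    set wq : M := q - cq • v with hwq
    have hwqW : wq ∈ W := by
      rw [hmemW, hwq]
      simp only [map_sub, map_smul, smul_eq_mul]
      rw [hsymm v q, hcq]
      field_simp; ring
    have hwqne : wq ≠ 0 := by
      intro h0
      have hq' : q = cq • v := by rw [← sub_eq_zero]; exact h0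
      rw [hq'] at hq0
      simp only [map_smul, LinearMap.smul_apply, smul_eq_mul] at hq0
      have hcq0 : cq = 0 := by
        rcases mul_eq_zero.mp hq0 with h | h
        · exact h
        · rcases mul_eq_zero.mp h with h' | h'
          · exact h'
          · exact absurd h' hfvv
      exact hq (by rw [hq', hcq0, zero_smul])
    by_cases hiso : ∃ w' ∈ W, w' ≠ 0 ∧ f w' w' = 0
    · -- recurse into W
      obtain ⟨w', hw'W, hw'ne, hw'0⟩ := hiso
      set WL : LieSubmodule ℂ L M :=
        { W with lie_mem := fun {x} {m} hm => hWlie x m hm } with hWL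
      have hWLsub : (WL : Submodule ℂ M) = W := rfl
      set f' : WL →ₗ[ℂ] WL →ₗ[ℂ] ℂ :=
        f.compl₁₂ (WL : Submodule ℂ M).subtype (WL : Submodule ℂ M).subtype with hf'
      have hf'app : ∀ a b : WL, f' a b = f (a : M) (b : M) := fun a b => rfl
      have hWlt : finrank ℂ WL < n := by
        have h1 : finrank ℂ W < finrank ℂ M :=
          Submodule.finrank_lt (fun h => hvW (h ▸ trivial))
        exact lt_of_lt_of_le h1 hdim
      have hrec := IH (finrank ℂ WL) hWlt WL (le_refl _) f'
        (fun a b => hsymm _ _)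
        (fun x a b => by
          rw [hf'app, hf'app]
          have hcoe : ∀ (y : L) (u : WL), ((⁅y, u⁆ : WL) : M) = ⁅y, (u : M)⁆ :=
            fun y u => rfl
          rw [hcoe, hcoe]
          exact hinv x _ _)
        ⟨w', hw'W⟩ (fun h0 => hw'ne (congrArg Subtype.val h0)) hw'0
      obtain ⟨v', hv'ne, hv'0, hv'eig⟩ := hrec
      refine ⟨(v' : M), fun h0 => hv'ne (Subtype.ext h0), hv'0, fun x => ?_⟩
      obtain ⟨c, hc⟩ := hv'eig x
      exact ⟨c, congrArg Subtype.val hc⟩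
    · -- no isotropic vector in W: then W ⊆ span {wq} and q itself works
      push_neg at hiso
      have hfwq : f wq wq ≠ 0 := hiso wq hwqW hwqne
      -- every element of W is a multiple of wq
      have hWspan : ∀ a ∈ W, ∃ t : ℂ, a = t • wq := by
        intro a ha
        by_contra hcon
        push_neg at hcon
        obtain ⟨t, ht⟩ := exists_isotropic_combination M f hsymm a wq hfwq
        have hne : a + t • wq ≠ 0 := by
          intro h0
          exact hcon (-t) (by rw [← sub_eq_zero]; rw [neg_smul, sub_neg_eq_add]; exact h0)
        have hmem : a + t • wq ∈ W := W.add_mem ha (W.smul_mem t hwqW)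
        exact hiso _ hmem hne ht
      -- q itself is an invariant isotropic vector
      have hcqne : cq ≠ 0 := by
        intro h0
        have : q = wq := by rw [hwq, h0, zero_smul, sub_zero]
        exact hfwq (by rw [← this]; exact hq0)
      refine ⟨q, hq, hq0, fun x => ?_⟩
      have hq_eq : q = cq • v + wq := by rw [hwq]; abel
      have hxq : ⁅x, q⁆ = ⁅x, wq⁆ := by
        rw [hq_eq, lie_add, lie_smul, heig0 x, smul_zero, zero_add]
      have hxwqW : ⁅x, wq⁆ ∈ W := hWlie x wq hwqW
      obtain ⟨t, ht⟩ := hWspan _ hxwqW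
      have ht0 : t = 0 := by
        have h1 := hinv x wq wq
        rw [ht] at h1
        simp only [map_smul, LinearMap.smul_apply, smul_eq_mul] at h1
        have h2 : t * f wq wq = 0 := by linear_combination h1 / 2
        rcases mul_eq_zero.mp h2 with h3 | h3
        · exact h3
        · exact absurd h3 hfwq
      exact ⟨0, by rw [hxq, ht, ht0, zero_smul, zero_smul]⟩



lemma main_aux (L : Type) [LieRing L] [LieAlgebra ℂ L]
    [FiniteDimensional ℂ L] [LieAlgebra.IsSolvable L] :
    ∀ (n : ℕ) (M : Type) [AddCommGroup M] [Module ℂ M] [FiniteDimensional ℂ M]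
      [LieRingModule L M] [LieModule ℂ L M],
    finrank ℂ M ≤ n →
    ∀ (f : M →ₗ[ℂ] M →ₗ[ℂ] ℂ), (∀ a c : M, f a c = f c a) →
    (∀ (x : L) (a c : M), f ⁅x, a⁆ c + f a ⁅x, c⁆ = 0) →
    ∃ p : Submodule ℂ M, (∀ (x : L), ∀ ξ ∈ p, ⁅x, ξ⁆ ∈ p) ∧
      (∀ ξ ∈ p, ∀ η ∈ p, f ξ η = 0) ∧
      (∀ U : Submodule ℂ M, (∀ ξ ∈ U, ∀ η ∈ U, f ξ η = 0) → p ≤ U → U = p) := by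
  intro n
  induction n using Nat.strong_induction_on with
  | _ n IH =>
    intro M _ _ _ _ _ hdim f hsymm hinv
    by_cases hbase : ∀ q : M, f q q = 0 → q = 0
    · refine ⟨⊥, ?_, ?_, ?_⟩
      · intro x ξ hξ
        rw [Submodule.mem_bot] at hξ ⊢
        rw [hξ, lie_zero]
      · intro ξ hξ η hη
        rw [Submodule.mem_bot] at hξ
        rw [hξ, map_zero, LinearMap.zero_apply]
      · intro U hU _
        rw [Submodule.eq_bot_iff]
        exact fun u hu => hbase u (hU u hu u hu)
    · push_neg at hbase
      obtain ⟨q, hq0, hqne⟩ := hbase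
      obtain ⟨v, hvne, hfvv, heig⟩ :=
        isotropic_line_aux L (finrank ℂ M) M le_rfl f hsymm hinv q hqne hq0
      -- the perp of v as a Lie submodule
      have hWlie : ∀ (x : L) (a : M), f v a = 0 → f v ⁅x, a⁆ = 0 := by
        intro x a ha
        obtain ⟨c, hc⟩ := heig x
        have h1 := hinv x v a
        rw [hc] at h1
        simp only [map_smul, LinearMap.smul_apply, smul_eq_mul, ha, mul_zero, zero_add] at h1
        exact h1
      set WL : LieSubmodule ℂ L M :=
        { LinearMap.ker (f v) with
          lie_mem := fun {x} {a} ha => hWlie x a ha } with hWL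
      have hmemWL : ∀ a : M, a ∈ WL ↔ f v a = 0 := fun a => Iff.rfl
      have hvWL : v ∈ WL := by rw [hmemWL]; exact hfvv
      set vh : WL := ⟨v, hvWL⟩ with hvh
      have hvhne : vh ≠ 0 := fun h => hvne (congrArg Subtype.val h)
      -- the line spanned by v inside WL, as a Lie submodule
      have hspan_lie : ∀ (x : L) (m : WL), m ∈ Submodule.span ℂ {vh} →
          ⁅x, m⁆ ∈ Submodule.span ℂ {vh} := by
        intro x m hm
        rw [Submodule.mem_span_singleton] at hm ⊢
        obtain ⟨t, rfl⟩ := hm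
        obtain ⟨c, hc⟩ := heig x
        refine ⟨t * c, ?_⟩
        apply Subtype.ext
        show (t * c) • v = ((⁅x, t • vh⁆ : WL) : M)
        have : ((⁅x, t • vh⁆ : WL) : M) = ⁅x, t • v⁆ := rfl
        rw [this, lie_smul, hc, smul_smul]
      set V : LieSubmodule ℂ L WL :=
        { Submodule.span ℂ {vh} with
          lie_mem := fun {x} {m} hm => hspan_lie x m hm } with hV
      have hmemV : ∀ m : WL, m ∈ V ↔ m ∈ Submodule.span ℂ {vh} := fun m => Iff.rfl
      -- the quotient
      set π : WL →ₗ[ℂ] (WL ⧸ V) := (V : Submodule ℂ WL).mkQ with hπ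
      have hπsurj : Function.Surjective π := Submodule.mkQ_surjective _
      have hbr : ∀ (x : L) (a : WL), ⁅x, π a⁆ = π ⁅x, a⁆ := fun x a => rfl
      have hcoebr : ∀ (x : L) (a : WL), ((⁅x, a⁆ : WL) : M) = ⁅x, (a : M)⁆ := fun x a => rfl
      -- the restricted form
      set fW : WL →ₗ[ℂ] WL →ₗ[ℂ] ℂ :=
        f.compl₁₂ (WL : Submodule ℂ M).subtype (WL : Submodule ℂ M).subtype with hfW
      have hfWapp : ∀ a b : WL, fW a b = f (a : M) (b : M) := fun a b => rfl
      have hkill : ∀ a : WL, ∀ m ∈ V, fW a m = 0 := by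
        intro a m hm
        rw [hmemV, Submodule.mem_span_singleton] at hm
        obtain ⟨t, rfl⟩ := hm
        rw [map_smul, smul_eq_mul, hfWapp]
        have : ((vh : WL) : M) = v := rfl
        rw [this, hsymm _ v]
        have h0 : f v (a : M) = 0 := a.2
        rw [h0, mul_zero]
      -- lift the form to the quotient, first argument
      have hker1 : (V : Submodule ℂ WL) ≤ LinearMap.ker fW := by
        intro m hm
        rw [LinearMap.mem_ker]
        apply LinearMap.ext
        intro b
        rw [LinearMap.zero_apply, hfWapp, hsymm, ← hfWapp]
        exact hkill b m hm
      set G : (WL ⧸ V) →ₗ[ℂ] (WL →ₗ[ℂ] ℂ) :=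
        Submodule.liftQ (V : Submodule ℂ WL) fW hker1 with hG
      have hGapp : ∀ a : WL, G (π a) = fW a := fun a =>
        Submodule.liftQ_apply _ fW a
      have hker2 : (V : Submodule ℂ WL) ≤ LinearMap.ker G.flip := by
        intro m hm
        rw [LinearMap.mem_ker]
        apply LinearMap.ext
        intro nb
        obtain ⟨b, rfl⟩ := hπsurj nb
        rw [LinearMap.zero_apply, LinearMap.flip_apply, hGapp]
        exact hkill b m hm
      set fbar : (WL ⧸ V) →ₗ[ℂ] (WL ⧸ V) →ₗ[ℂ] ℂ :=
        Submodule.liftQ (V : Submodule ℂ WL) G.flip hker2 with hfbar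
      have hfbarapp : ∀ a b : WL, fbar (π a) (π b) = f (a : M) (b : M) := by
        intro a b
        have h1 : fbar (π a) = G.flip a := Submodule.liftQ_apply _ G.flip a
        rw [h1, LinearMap.flip_apply, hGapp, hfWapp]
        exact hsymm _ _
      -- dimension count
      have hn1 : 1 ≤ n := by
        have h0 : 0 < finrank ℂ M := by
          haveI : Nontrivial M := nontrivial_of_ne v 0 hvne
          exact Module.finrank_pos
        omega
      have hdimN : finrank ℂ (WL ⧸ V) < n := by
        have h1 : finrank ℂ (WL ⧸ V) + finrank ℂ (V : Submodule ℂ WL) =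
            finrank ℂ WL := Submodule.finrank_quotient_add_finrank _
        have h2 : finrank ℂ (V : Submodule ℂ WL) = 1 := by
          show finrank ℂ (Submodule.span ℂ {vh}) = 1
          exact finrank_span_singleton hvhne
        have h3 : finrank ℂ WL ≤ finrank ℂ M :=
          Submodule.finrank_le (WL : Submodule ℂ M)
        omega
      -- apply the induction hypothesis to the quotient
      obtain ⟨pbar, hplie, hpiso, hpmax⟩ := IH (finrank ℂ (WL ⧸ V)) hdimN (WL ⧸ V)
        le_rfl fbar
        (by
          intro na nb
          obtain ⟨a, rfl⟩ := hπsurj na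
          obtain ⟨b, rfl⟩ := hπsurj nb
          rw [hfbarapp, hfbarapp]
          exact hsymm _ _)
        (by
          intro x na nb
          obtain ⟨a, rfl⟩ := hπsurj na
          obtain ⟨b, rfl⟩ := hπsurj nb
          rw [hbr, hbr, hfbarapp, hfbarapp, hcoebr, hcoebr]
          exact hinv x _ _)
      set p : Submodule ℂ M :=
        Submodule.map (WL : Submodule ℂ M).subtype (Submodule.comap π pbar) with hp
      have hmemp : ∀ ξ : M, ξ ∈ p ↔ ∃ a : WL, π a ∈ pbar ∧ (a : M) = ξ := by
        intro ξ
        constructor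
        · rintro ⟨a, ha, rfl⟩
          exact ⟨a, ha, rfl⟩
        · rintro ⟨a, ha, rfl⟩
          exact ⟨a, ha, rfl⟩
      refine ⟨p, ?_, ?_, ?_⟩
      · intro x ξ hξ
        rw [hmemp] at hξ ⊢
        obtain ⟨a, ha, rfl⟩ := hξ
        exact ⟨⁅x, a⁆, by rw [← hbr]; exact hplie x _ ha, hcoebr x a⟩
      · intro ξ hξ η hη
        rw [hmemp] at hξ hη
        obtain ⟨a, ha, rfl⟩ := hξ
        obtain ⟨b, hb, rfl⟩ := hη
        rw [← hfbarapp]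
        exact hpiso _ ha _ hb
      · intro U hU hle
        have hπvh : π vh = 0 := by
          rw [hπ]
          exact (Submodule.Quotient.mk_eq_zero _).mpr (Submodule.mem_span_singleton_self vh)
        have hvp : v ∈ p := (hmemp v).mpr ⟨vh, by rw [hπvh]; exact pbar.zero_mem, rfl⟩
        have hUW : ∀ u ∈ U, u ∈ WL := by
          intro u hu
          rw [hmemWL]
          exact hU v (hle hvp) u hu
        set Ubar : Submodule ℂ (WL ⧸ V) :=
          Submodule.map π (Submodule.comap (WL : Submodule ℂ M).subtype U) with hUbar
        have hmemUbar : ∀ nξ : WL ⧸ V, nξ ∈ Ubar ↔ ∃ b : WL, (b : M) ∈ U ∧ π b = nξ := by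
          intro nξ
          constructor
          · rintro ⟨b, hb, rfl⟩
            exact ⟨b, hb, rfl⟩
          · rintro ⟨b, hb, rfl⟩
            exact ⟨b, hb, rfl⟩
        have hple : pbar ≤ Ubar := by
          intro nb hnb
          obtain ⟨b, rfl⟩ := hπsurj nb
          exact (hmemUbar _).mpr ⟨b, hle ((hmemp _).mpr ⟨b, hnb, rfl⟩), rfl⟩
        have hUiso : ∀ nξ ∈ Ubar, ∀ nη ∈ Ubar, fbar nξ nη = 0 := by
          intro nξ hnξ nη hnη
          obtain ⟨b, hbU, rfl⟩ := (hmemUbar _).mp hnξ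
          obtain ⟨c, hcU, rfl⟩ := (hmemUbar _).mp hnη
          rw [hfbarapp]
          exact hU _ hbU _ hcU
        have hUp : Ubar = pbar := hpmax Ubar hUiso hple
        have hUlep : U ≤ p := by
          intro u hu
          refine (hmemp u).mpr ⟨⟨u, hUW u hu⟩, ?_, rfl⟩
          have h1 : π ⟨u, hUW u hu⟩ ∈ Ubar := (hmemUbar _).mpr ⟨⟨u, hUW u hu⟩, hu, rfl⟩
          rwa [hUp] at h1
        exact le_antisymm hUlep hle



/-- **existence of polarizations.** Let `𝔤 = 𝔤₀ ⊕ 𝔤₁` be a Lie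
superalgebra over `ℂ` encoded in components (`L` is `𝔤₀`, `M` is `𝔤₁`, `b` the
bracket of two odd elements), with `𝔤₀` solvable, and let `l : 𝔤₀ → ℂ` be a linear
functional vanishing on `⁅𝔤₀,𝔤₀⁆`.  Then there exists a polarization for `l`: a
`𝔤₀`-submodule `p ⊆ 𝔤₁` with `f_l(p,p) = 0` (where `f_l(ξ,η) = l(b(ξ,η))`), which is
maximal among all subspaces `U ⊆ 𝔤₁` with `f_l(U,U) = 0`. -/
theorem exists_polarization
    (L : Type) [LieRing L] [LieAlgebra ℂ L] [FiniteDimensional ℂ L]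
    [LieAlgebra.IsSolvable L]
    (M : Type) [AddCommGroup M] [Module ℂ M] [FiniteDimensional ℂ M]
    [LieRingModule L M] [LieModule ℂ L M]
    (b : M →ₗ[ℂ] M →ₗ[ℂ] L)
    (hb_symm : ∀ ξ η : M, b ξ η = b η ξ)
    (hb_equivariant : ∀ (x : L) (ξ η : M), ⁅x, b ξ η⁆ = b ⁅x, ξ⁆ η + b ξ ⁅x, η⁆)
    (hb_jacobi : ∀ ξ η ζ : M, ⁅b ξ η, ζ⁆ + ⁅b η ζ, ξ⁆ + ⁅b ζ ξ, η⁆ = 0)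
    (l : L →ₗ[ℂ] ℂ)
    (hl : ∀ x y : L, l ⁅x, y⁆ = 0) :
    ∃ p : Submodule ℂ M,
      (∀ (x : L), ∀ ξ ∈ p, ⁅x, ξ⁆ ∈ p) ∧
      (∀ ξ ∈ p, ∀ η ∈ p, l (b ξ η) = 0) ∧
      (∀ U : Submodule ℂ M, (∀ ξ ∈ U, ∀ η ∈ U, l (b ξ η) = 0) → p ≤ U → U = p) := by
  have hfapp : ∀ ξ η : M, (b.compr₂ l) ξ η = l (b ξ η) := fun ξ η => rfl
  obtain ⟨p, h1, h2, h3⟩ := main_aux L (Module.finrank ℂ M) M le_rfl (b.compr₂ l)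
    (fun a c => by rw [hfapp, hfapp, hb_symm])
    (fun x a c => by
      rw [hfapp, hfapp, ← map_add, ← hb_equivariant]
      exact hl x _)
  exact ⟨p, h1, fun ξ hξ η hη => h2 ξ hξ η hη, h3⟩
end

section
/- Let 𝔤 = 𝔤₀ ⊕ 𝔤₁ be a Lie superalgebra over ℂ encoded in components, and let 𝔭 ⊆ 𝔤₁ be any 𝔤₀-submodule. Then the functional θ_𝔭 vanishes on all brackets of the subalgebra 𝔥 = 𝔤₀ ⊕ 𝔭: namely θ_𝔭(⁅x,y⁆) = 0 for all x, y ∈ 𝔤₀, and θ_𝔭(b(p,q)) = 0 for all p, q ∈ 𝔭 (equivalently, the trace of the action of b(p,q) induced on the quotient module 𝔤₁/𝔭 is zero). -/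
/-- For a `𝔤₀`-submodule `p ⊆ 𝔤₁` and `x ∈ 𝔤₀` leaving `p` invariant,
`θ_p(x) = -(1/2) · tr(x on 𝔤₁/p)`: minus one half of the trace of the action of `x`
induced on the quotient module `𝔤₁/p` (which equals one half of the supertrace of
`ad x` on `𝔤/(𝔤₀ ⊕ p)`). -/
noncomputable def theta {L M : Type} [LieRing L] [LieAlgebra ℂ L]
    [AddCommGroup M] [Module ℂ M] [LieRingModule L M] [LieModule ℂ L M]
    (p : Submodule ℂ M) (x : L) (hx : ∀ ξ ∈ p, ⁅x, ξ⁆ ∈ p) : ℂ :=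
  -(1 / 2 : ℂ) * LinearMap.trace ℂ (M ⧸ p)
    (Submodule.mapQ p p (LieModule.toEnd ℂ L M x) (fun ξ hξ => hx ξ hξ))

/-- Let `𝔤 = 𝔤₀ ⊕ 𝔤₁` be a Lie superalgebra over `ℂ` encoded in
components (`L` is `𝔤₀`, `M` is `𝔤₁`, `b` the bracket of two odd elements), and let
`p ⊆ 𝔤₁` be any `𝔤₀`-submodule.  Then the functional `θ_p` vanishes on all brackets
of the subalgebra `𝔥 = 𝔤₀ ⊕ p`: namely `θ_p(⁅x,y⁆) = 0` for all `x y ∈ 𝔤₀` and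
`θ_p(b(q,r)) = 0` for all `q r ∈ p`. -/
theorem theta_vanishes_on_brackets
    (L : Type) [LieRing L] [LieAlgebra ℂ L] [FiniteDimensional ℂ L]
    (M : Type) [AddCommGroup M] [Module ℂ M] [FiniteDimensional ℂ M]
    [LieRingModule L M] [LieModule ℂ L M]
    (b : M →ₗ[ℂ] M →ₗ[ℂ] L)
    (hb_symm : ∀ ξ η : M, b ξ η = b η ξ)
    (hb_equivariant : ∀ (x : L) (ξ η : M), ⁅x, b ξ η⁆ = b ⁅x, ξ⁆ η + b ξ ⁅x, η⁆)
    (hb_jacobi : ∀ ξ η ζ : M, ⁅b ξ η, ζ⁆ + ⁅b η ζ, ξ⁆ + ⁅b ζ ξ, η⁆ = 0)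
    (p : Submodule ℂ M)
    (hp : ∀ (x : L), ∀ ξ ∈ p, ⁅x, ξ⁆ ∈ p) :
    (∀ x y : L, theta p ⁅x, y⁆ (hp ⁅x, y⁆) = 0) ∧
    (∀ q ∈ p, ∀ r ∈ p, theta p (b q r) (hp (b q r)) = 0) := by

  constructor
  · intro x y
    unfold theta
    have h : Submodule.mapQ p p (LieModule.toEnd ℂ L M ⁅x, y⁆)
        (fun ξ hξ => hp ⁅x, y⁆ ξ hξ) =
        Submodule.mapQ p p (LieModule.toEnd ℂ L M x) (fun ξ hξ => hp x ξ hξ) ∘ₗ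
          Submodule.mapQ p p (LieModule.toEnd ℂ L M y) (fun ξ hξ => hp y ξ hξ) -
        Submodule.mapQ p p (LieModule.toEnd ℂ L M y) (fun ξ hξ => hp y ξ hξ) ∘ₗ
          Submodule.mapQ p p (LieModule.toEnd ℂ L M x) (fun ξ hξ => hp x ξ hξ) := by
      apply Submodule.linearMap_qext
      ext ξ
      simp [Submodule.mapQ_apply, LieModule.toEnd_apply_apply, lie_lie]
      rfl
    rw [h]
    rw [map_sub]
    rw [show (Submodule.mapQ p p (LieModule.toEnd ℂ L M x) (fun ξ hξ => hp x ξ hξ) ∘ₗ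
          Submodule.mapQ p p (LieModule.toEnd ℂ L M y) (fun ξ hξ => hp y ξ hξ)) =
        Submodule.mapQ p p (LieModule.toEnd ℂ L M x) (fun ξ hξ => hp x ξ hξ) *
          Submodule.mapQ p p (LieModule.toEnd ℂ L M y) (fun ξ hξ => hp y ξ hξ) from rfl]
    rw [show (Submodule.mapQ p p (LieModule.toEnd ℂ L M y) (fun ξ hξ => hp y ξ hξ) ∘ₗ
          Submodule.mapQ p p (LieModule.toEnd ℂ L M x) (fun ξ hξ => hp x ξ hξ)) =
        Submodule.mapQ p p (LieModule.toEnd ℂ L M y) (fun ξ hξ => hp y ξ hξ) *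
          Submodule.mapQ p p (LieModule.toEnd ℂ L M x) (fun ξ hξ => hp x ξ hξ) from rfl]
    rw [LinearMap.trace_mul_comm]
    ring
  · intro q hq r hr
    unfold theta
    have h : Submodule.mapQ p p (LieModule.toEnd ℂ L M (b q r))
        (fun ξ hξ => hp (b q r) ξ hξ) = 0 := by
      apply Submodule.linearMap_qext
      ext η
      simp only [LinearMap.comp_apply, Submodule.mkQ_apply, Submodule.mapQ_apply, LieModule.toEnd_apply_apply,
        LinearMap.zero_comp, LinearMap.zero_apply]
      show Submodule.Quotient.mk (⁅b q r, η⁆ : M) = (0 : M ⧸ p)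
      rw [Submodule.Quotient.mk_eq_zero]
      have hj := hb_jacobi r η q
      have : ⁅b q r, η⁆ = -⁅b r η, q⁆ - ⁅b η q, r⁆ := by
        linear_combination (norm := module) hj
      rw [this]
      exact sub_mem (neg_mem (hp (b r η) q hq)) (hp (b η q) r hr)
    rw [h, map_zero, mul_zero]
end

section
/- Let 𝔤 = 𝔤₀ ⊕ 𝔤₁ be a Lie superalgebra over ℂ encoded in components, with 𝔤₀ solvable. Let λ : 𝔤₀ → ℂ vanish on ⁅𝔤₀,𝔤₀⁆, let 𝔭 and 𝔮 be polarizations for λ, and let F be a 𝔤₀-submodule with 𝔭 ∩ 𝔮 ⊆ F ⊆ 𝔭. Let F^⊥ = { ξ ∈ 𝔤₁ : f_λ(ξ, F) = 0 }. Then R = F + (F^⊥ ∩ 𝔮) is a polarization for λ. -/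
/-- The orthogonal complement `F^⊥ = {ξ ∈ 𝔤₁ : f_l(ξ, F) = 0}` of a subspace
`F ⊆ 𝔤₁` with respect to the symmetric bilinear form `f_l(ξ,η) = l(b(ξ,η))`. -/
def fPerp {L M : Type} [LieRing L] [LieAlgebra ℂ L] [AddCommGroup M] [Module ℂ M]
    (l : L →ₗ[ℂ] ℂ) (b : M →ₗ[ℂ] M →ₗ[ℂ] L) (F : Submodule ℂ M) : Submodule ℂ M where
  carrier := {ξ : M | ∀ η ∈ F, l (b ξ η) = 0}
  zero_mem' := by intro η hη; simp
  add_mem' := by intro ξ ξ' hξ hξ' η hη; simp [hξ η hη, hξ' η hη]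
  smul_mem' := by intro c ξ hξ η hη; simp [hξ η hη]

lemma mem_fPerp {L M : Type} [LieRing L] [LieAlgebra ℂ L] [AddCommGroup M] [Module ℂ M]
    (l : L →ₗ[ℂ] ℂ) (b : M →ₗ[ℂ] M →ₗ[ℂ] L) (F : Submodule ℂ M) (ξ : M) :
    ξ ∈ fPerp l b F ↔ ∀ η ∈ F, l (b ξ η) = 0 := Iff.rfl

lemma fPerp_antitone {L M : Type} [LieRing L] [LieAlgebra ℂ L] [AddCommGroup M] [Module ℂ M]
    (l : L →ₗ[ℂ] ℂ) (b : M →ₗ[ℂ] M →ₗ[ℂ] L) {F G : Submodule ℂ M} (h : F ≤ G) :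
    fPerp l b G ≤ fPerp l b F := fun ξ hξ η hη => hξ η (h hη)

/-- The rank of the pairing between two subspaces equals the rank of its flip;
in dimension form. -/
lemma rank_identity {L M : Type} [LieRing L] [LieAlgebra ℂ L]
    [AddCommGroup M] [Module ℂ M] [FiniteDimensional ℂ M]
    (l : L →ₗ[ℂ] ℂ) (b : M →ₗ[ℂ] M →ₗ[ℂ] L)
    (hb_symm : ∀ ξ η : M, b ξ η = b η ξ)
    (U W : Submodule ℂ M) :
    Module.finrank ℂ U + Module.finrank ℂ (W ⊓ fPerp l b U : Submodule ℂ M) =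
    Module.finrank ℂ W + Module.finrank ℂ (U ⊓ fPerp l b W : Submodule ℂ M) := by
  classical
  set B : M →ₗ[ℂ] M →ₗ[ℂ] ℂ := b.compr₂ l with hB
  set Φ : U →ₗ[ℂ] Module.Dual ℂ W := (B ∘ₗ U.subtype).compl₂ W.subtype with hΦ
  have hker : LinearMap.ker Φ = (fPerp l b W).comap U.subtype := by
    ext u
    simp only [LinearMap.mem_ker, Submodule.mem_comap, mem_fPerp]
    constructor
    · intro h η hη
      have := congrArg (fun g => g ⟨η, hη⟩) h
      simpa [hΦ, hB] using this
    · intro h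
      ext w
      simpa [hΦ, hB] using h w.1 w.2
  have hker_flip : LinearMap.ker Φ.flip = (fPerp l b U).comap W.subtype := by
    ext w
    simp only [LinearMap.mem_ker, Submodule.mem_comap, mem_fPerp]
    constructor
    · intro h η hη
      have := congrArg (fun g => g ⟨η, hη⟩) h
      rw [hb_symm]
      simpa [hΦ, hB] using this
    · intro h
      ext u
      have := h u.1 u.2
      rw [hb_symm] at this
      simpa [hΦ, hB] using this
  have hrange : Module.finrank ℂ (LinearMap.range Φ.flip) =
      Module.finrank ℂ (LinearMap.range Φ) := by
    have heq : Φ.flip = Φ.dualMap ∘ₗ (Module.evalEquiv ℂ W).toLinearMap := by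
      ext w u; rfl
    have : LinearMap.range Φ.flip = LinearMap.range Φ.dualMap := by
      rw [heq, LinearMap.range_comp, LinearEquiv.range, Submodule.map_top]
    rw [this, LinearMap.finrank_range_dualMap_eq_finrank_range]
  have hcomap : ∀ (A P : Submodule ℂ M),
      Module.finrank ℂ (P.comap A.subtype) = Module.finrank ℂ (A ⊓ P : Submodule ℂ M) := by
    intro A P
    rw [← Submodule.finrank_map_subtype_eq A (P.comap A.subtype),
      Submodule.map_comap_subtype]
  have h1 := LinearMap.finrank_range_add_finrank_ker Φ
  have h2 := LinearMap.finrank_range_add_finrank_ker Φ.flip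
  rw [hker, hcomap] at h1
  rw [hker_flip, hcomap] at h2
  omega

/-- Let `𝔤 = 𝔤₀ ⊕ 𝔤₁` be a Lie superalgebra over `ℂ` encoded in
components (`L` is `𝔤₀`, `M` is `𝔤₁`, `b` the bracket of two odd elements), with
`𝔤₀` solvable.  Let `l : 𝔤₀ → ℂ` vanish on `⁅𝔤₀,𝔤₀⁆`, let `p` and `q` be
polarizations for `l`, and let `F` be a `𝔤₀`-submodule with `p ∩ q ⊆ F ⊆ p`.
Then `R = F + (F^⊥ ∩ q)` is a polarization for `l`. -/
theorem sum_with_perp_is_polarization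
    (L : Type) [LieRing L] [LieAlgebra ℂ L] [FiniteDimensional ℂ L]
    [LieAlgebra.IsSolvable L]
    (M : Type) [AddCommGroup M] [Module ℂ M] [FiniteDimensional ℂ M]
    [LieRingModule L M] [LieModule ℂ L M]
    (b : M →ₗ[ℂ] M →ₗ[ℂ] L)
    (hb_symm : ∀ ξ η : M, b ξ η = b η ξ)
    (hb_equivariant : ∀ (x : L) (ξ η : M), ⁅x, b ξ η⁆ = b ⁅x, ξ⁆ η + b ξ ⁅x, η⁆)
    (hb_jacobi : ∀ ξ η ζ : M, ⁅b ξ η, ζ⁆ + ⁅b η ζ, ξ⁆ + ⁅b ζ ξ, η⁆ = 0)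
    (l : L →ₗ[ℂ] ℂ)
    (hl : ∀ x y : L, l ⁅x, y⁆ = 0)
    -- `p` is a polarization for `l`
    (p : Submodule ℂ M)
    (hp : ∀ (x : L), ∀ ξ ∈ p, ⁅x, ξ⁆ ∈ p)
    (hp_iso : ∀ ξ ∈ p, ∀ η ∈ p, l (b ξ η) = 0)
    (hp_max : ∀ U : Submodule ℂ M, (∀ ξ ∈ U, ∀ η ∈ U, l (b ξ η) = 0) → p ≤ U → U = p)
    -- `q` is a polarization for `l`
    (q : Submodule ℂ M)
    (hq : ∀ (x : L), ∀ ξ ∈ q, ⁅x, ξ⁆ ∈ q)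
    (hq_iso : ∀ ξ ∈ q, ∀ η ∈ q, l (b ξ η) = 0)
    (hq_max : ∀ U : Submodule ℂ M, (∀ ξ ∈ U, ∀ η ∈ U, l (b ξ η) = 0) → q ≤ U → U = q)
    -- `F` is a `𝔤₀`-submodule with `p ∩ q ⊆ F ⊆ p`
    (F : Submodule ℂ M)
    (hF : ∀ (x : L), ∀ ξ ∈ F, ⁅x, ξ⁆ ∈ F)
    (hFlow : p ⊓ q ≤ F) (hFhigh : F ≤ p) :
    -- then `R = F + (F^⊥ ∩ q)` is a polarization for `l`
    (∀ (x : L), ∀ ξ ∈ F ⊔ (fPerp l b F ⊓ q), ⁅x, ξ⁆ ∈ F ⊔ (fPerp l b F ⊓ q)) ∧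
    (∀ ξ ∈ F ⊔ (fPerp l b F ⊓ q), ∀ η ∈ F ⊔ (fPerp l b F ⊓ q), l (b ξ η) = 0) ∧
    (∀ U : Submodule ℂ M, (∀ ξ ∈ U, ∀ η ∈ U, l (b ξ η) = 0) →
      F ⊔ (fPerp l b F ⊓ q) ≤ U → U = F ⊔ (fPerp l b F ⊓ q)) := by
  set R : Submodule ℂ M := F ⊔ (fPerp l b F ⊓ q) with hR
  -- invariance
  have hinv : ∀ (x : L), ∀ ξ ∈ R, ⁅x, ξ⁆ ∈ R := by
    intro x ξ hξ
    obtain ⟨a, ha, c, hc, rfl⟩ := Submodule.mem_sup.mp hξ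
    rw [lie_add]
    refine Submodule.add_mem _ (Submodule.mem_sup_left (hF x a ha))
      (Submodule.mem_sup_right ?_)
    refine ⟨?_, hq x c hc.2⟩
    intro η hη
    have hbr : b ⁅x, c⁆ η = ⁅x, b c η⁆ - b c ⁅x, η⁆ := by
      rw [hb_equivariant]; abel
    rw [hbr, map_sub, hl, hc.1 ⁅x, η⁆ (hF x η hη), sub_zero]
  -- isotropy
  have hiso : ∀ ξ ∈ R, ∀ η ∈ R, l (b ξ η) = 0 := by
    intro ξ hξ η hη
    obtain ⟨a, ha, c, hc, rfl⟩ := Submodule.mem_sup.mp hξ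
    obtain ⟨a', ha', c', hc', rfl⟩ := Submodule.mem_sup.mp hη
    have h1 : l (b a a') = 0 := hp_iso a (hFhigh ha) a' (hFhigh ha')
    have h2 : l (b a c') = 0 := by rw [hb_symm]; exact hc'.1 a ha
    have h3 : l (b c a') = 0 := hc.1 a' ha'
    have h4 : l (b c c') = 0 := hq_iso c hc.2 c' hc'.2
    simp [map_add, LinearMap.add_apply, h1, h2, h3, h4]
  refine ⟨hinv, hiso, ?_⟩
  -- maximality
  intro U hU_iso hRU
  have hFR : F ≤ R := le_sup_left
  have hPQR : fPerp l b F ⊓ q ≤ R := le_sup_right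
  -- Step 1 : U ⊓ q^⊥ = R ⊓ q^⊥
  have h1 : U ⊓ fPerp l b q = R ⊓ fPerp l b q := by
    refine le_antisymm ?_ (inf_le_inf_right _ hRU)
    rintro ξ ⟨hξU, hξperp⟩
    have hξq : ξ ∈ q := by
      have hiso' : ∀ α ∈ q ⊔ Submodule.span ℂ {ξ}, ∀ β ∈ q ⊔ Submodule.span ℂ {ξ},
          l (b α β) = 0 := by
        intro α hα β hβ
        obtain ⟨a, ha, c, hc, rfl⟩ := Submodule.mem_sup.mp hα
        obtain ⟨a', ha', c', hc', rfl⟩ := Submodule.mem_sup.mp hβ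
        obtain ⟨t, rfl⟩ := Submodule.mem_span_singleton.mp hc
        obtain ⟨s, rfl⟩ := Submodule.mem_span_singleton.mp hc'
        have e1 : l (b a a') = 0 := hq_iso a ha a' ha'
        have e2 : l (b ξ a') = 0 := hξperp a' ha'
        have e3 : l (b a ξ) = 0 := by rw [hb_symm]; exact hξperp a ha
        have e4 : l (b ξ ξ) = 0 := hU_iso ξ hξU ξ hξU
        simp [map_add, LinearMap.add_apply, map_smul, LinearMap.smul_apply,
          e1, e2, e3, e4]
      have hmem : ξ ∈ q ⊔ Submodule.span ℂ {ξ} :=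
        Submodule.mem_sup_right (Submodule.mem_span_singleton_self ξ)
      rwa [hq_max (q ⊔ Submodule.span ℂ {ξ}) hiso' le_sup_left] at hmem
    have hξF : ξ ∈ fPerp l b F := fun η hη => hU_iso ξ hξU η (hRU (hFR hη))
    exact ⟨hPQR ⟨hξF, hξq⟩, hξperp⟩
  -- Step 2 : q ⊓ U^⊥ = q ⊓ R^⊥
  have h2 : q ⊓ fPerp l b U = q ⊓ fPerp l b R := by
    refine le_antisymm (inf_le_inf_left _ (fPerp_antitone l b hRU)) ?_
    rintro η ⟨hηq, hηperp⟩
    have hηF : η ∈ fPerp l b F := fun γ hγ => hηperp γ (hFR hγ)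
    have hηU : η ∈ U := hRU (hPQR ⟨hηF, hηq⟩)
    exact ⟨hηq, fun u hu => hU_iso η hηU u hu⟩
  have key1 := rank_identity l b hb_symm U q
  have key2 := rank_identity l b hb_symm R q
  rw [h1, h2] at key1
  have hfin : Module.finrank ℂ U = Module.finrank ℂ R := by omega
  exact (Submodule.eq_of_le_of_finrank_le hRU hfin.le).symm
end

section
/- Let 𝔤 = 𝔤₀ ⊕ 𝔤₁ be a Lie superalgebra over ℂ encoded in components, with 𝔤₀ solvable. Let λ : 𝔤₀ → ℂ vanish on ⁅𝔤₀,𝔤₀⁆, let 𝔭 be a polarization for λ, and suppose the rank of the form f_λ is odd. Let 𝔭^⊥ = { ξ ∈ 𝔤₁ : f_λ(ξ, 𝔭) = 0 } (so 𝔭 ⊊ 𝔭^⊥). Then x•ξ ∈ 𝔭 for every x ∈ 𝔤₀ and every ξ ∈ 𝔭^⊥; that is, 𝔤₀ acts by zero on the quotient 𝔭^⊥/𝔭. -/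
/-- Let `𝔤 = 𝔤₀ ⊕ 𝔤₁` be a Lie superalgebra over `ℂ` encoded in
components (`L` is `𝔤₀`, `M` is `𝔤₁`, `b` the bracket of two odd elements), with
`𝔤₀` solvable.  Let `l : 𝔤₀ → ℂ` vanish on `⁅𝔤₀,𝔤₀⁆`, let `p` be a polarization
for `l`, and suppose the rank of the form `f_l(ξ,η) = l(b(ξ,η))` (that is,
`dim 𝔤₁ − dim (radical of f_l)`) is odd.  Then `⁅x, ξ⁆ ∈ p` for every `x ∈ 𝔤₀` and
every `ξ ∈ p^⊥ = {ξ : f_l(ξ, p) = 0}`; that is, `𝔤₀` acts by zero on `p^⊥/p`. -/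
theorem even_part_acts_trivially_on_perp_quotient
    (L : Type) [LieRing L] [LieAlgebra ℂ L] [FiniteDimensional ℂ L]
    [LieAlgebra.IsSolvable L]
    (M : Type) [AddCommGroup M] [Module ℂ M] [FiniteDimensional ℂ M]
    [LieRingModule L M] [LieModule ℂ L M]
    (b : M →ₗ[ℂ] M →ₗ[ℂ] L)
    (hb_symm : ∀ ξ η : M, b ξ η = b η ξ)
    (hb_equivariant : ∀ (x : L) (ξ η : M), ⁅x, b ξ η⁆ = b ⁅x, ξ⁆ η + b ξ ⁅x, η⁆)
    (hb_jacobi : ∀ ξ η ζ : M, ⁅b ξ η, ζ⁆ + ⁅b η ζ, ξ⁆ + ⁅b ζ ξ, η⁆ = 0)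
    (l : L →ₗ[ℂ] ℂ)
    (hl : ∀ x y : L, l ⁅x, y⁆ = 0)
    -- `p` is a polarization for `l`
    (p : Submodule ℂ M)
    (hp : ∀ (x : L), ∀ ξ ∈ p, ⁅x, ξ⁆ ∈ p)
    (hp_iso : ∀ ξ ∈ p, ∀ η ∈ p, l (b ξ η) = 0)
    (hp_max : ∀ U : Submodule ℂ M, (∀ ξ ∈ U, ∀ η ∈ U, l (b ξ η) = 0) → p ≤ U → U = p)
    -- the rank of `f_l` is odd
    (hrank : Odd (Module.finrank ℂ M - Module.finrank ℂ ↥(LinearMap.ker (b.compr₂ l)))) :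
    -- then `𝔤₀` maps `p^⊥` into `p`, i.e. `𝔤₀` acts by zero on `p^⊥/p`
    ∀ ξ : M, (∀ η ∈ p, l (b ξ η) = 0) → ∀ x : L, ⁅x, ξ⁆ ∈ p := by
  -- invariance of the form
  have hinv : ∀ (x : L) (ξ η : M), l (b ⁅x, ξ⁆ η) = - l (b ξ ⁅x, η⁆) := by
    intro x ξ η
    have h := congrArg l (hb_equivariant x ξ η)
    rw [hl, map_add] at h
    linear_combination -h
  -- key lemma: isotropic vectors in p^⊥ lie in p
  have key : ∀ ξ : M, (∀ η ∈ p, l (b ξ η) = 0) → l (b ξ ξ) = 0 → ξ ∈ p := by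
    intro ξ hperp hself
    have hU : (p ⊔ Submodule.span ℂ {ξ}) = p := by
      apply hp_max _ _ le_sup_left
      intro a ha a' ha'
      rw [Submodule.mem_sup] at ha ha'
      obtain ⟨y, hy, z, hz, rfl⟩ := ha
      obtain ⟨y', hy', z', hz', rfl⟩ := ha'
      rw [Submodule.mem_span_singleton] at hz hz'
      obtain ⟨c, rfl⟩ := hz
      obtain ⟨c', rfl⟩ := hz'
      have e1 : l (b y y') = 0 := hp_iso y hy y' hy'
      have e2 : l (b ξ y') = 0 := hperp y' hy'
      have e3 : l (b y ξ) = 0 := by rw [hb_symm]; exact hperp y hy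
      simp [map_add, map_smul, smul_eq_mul, e1, e2, e3, hself]
    rw [← hU]
    exact Submodule.mem_sup_right (Submodule.mem_span_singleton_self ξ)
  intro ξ hξ x
  set ζ := ⁅x, ξ⁆ with hζdef
  -- ζ ∈ p^⊥
  have hζperp : ∀ η ∈ p, l (b ζ η) = 0 := by
    intro η hη
    rw [hinv x ξ η, hξ _ (hp x η hη)]
    ring
  -- f(ζ, ξ) = 0
  have hζξ : l (b ζ ξ) = 0 := by
    have h := hinv x ξ ξ
    rw [hb_symm ξ ζ] at h
    linear_combination h / 2
  by_cases hζp : ζ ∈ p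
  · exact hζp
  exfalso
  by_cases hξp : ξ ∈ p
  · exact hζp (hp x ξ hξp)
  have hξξ : l (b ξ ξ) ≠ 0 := fun h => hξp (key ξ hξ h)
  have hζζ : l (b ζ ζ) ≠ 0 := fun h => hζp (key ζ hζperp h)
  obtain ⟨t, ht⟩ : ∃ t : ℂ, t ^ 2 = -(l (b ξ ξ)) / l (b ζ ζ) :=
    IsAlgClosed.exists_pow_nat_eq _ (by norm_num)
  have ht2 : t ^ 2 * l (b ζ ζ) = -(l (b ξ ξ)) := by
    rw [ht]; field_simp
  set v := ξ + t • ζ with hvdef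
  have hvperp : ∀ η ∈ p, l (b v η) = 0 := by
    intro η hη
    simp [hvdef, map_add, map_smul, smul_eq_mul, hξ η hη, hζperp η hη]
  have hξζ : l (b ξ ζ) = 0 := by rw [hb_symm]; exact hζξ
  have hvv : l (b v v) = 0 := by
    simp only [hvdef, map_add, map_smul, LinearMap.add_apply, LinearMap.smul_apply,
      smul_eq_mul, hξζ, hζξ]
    linear_combination ht2
  have hvp : v ∈ p := key v hvperp hvv
  have : l (b ξ v) = 0 := hξ v hvp
  simp only [hvdef, map_add, map_smul, LinearMap.add_apply, LinearMap.smul_apply,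
    smul_eq_mul, hξζ] at this
  exact hξξ (by linear_combination this)
end
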